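/- arXiv:2102.05094 — 4 statements merged into one kernel-verified Lean document; each statement's English description precedes it below -/
import Mathlib

section
/- Let n ≥ 21. Let H_n be a random variable on {1, …, n} with P[H_n = k] = 1/(L_n k), L_n = Σ_{j=1}^n 1/j, and for each prime p let α_p(k) denote the p-adic valuation of k (so that k = ∏_p p^{α_p(k)}). Let {ξ_p}_{p prime} be independent geometric random variables with P[ξ_p = k] = (1 − p⁻¹) p^{−k} for k ∈ ℕ₀, and let 𝒜_n be the event {∏_{p prime, p ≤ n} p^{ξ_p} ≤ n}. Then the law of the random vector (α_p(H_n) : p prime, p ≤ n) equals the conditional law of (ξ_p : p prime, p ≤ n) given 𝒜_n. -/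
open MeasureTheory ProbabilityTheory Finset
open scoped ProbabilityTheory ENNReal

/-- The set of primes `p ≤ n`, as a finset of `Nat.Primes`. -/
noncomputable def primesUpTo' (n : ℕ) : Finset Nat.Primes :=
  Finset.subtype Nat.Prime (Finset.range (n + 1))

namespace CondIndepAux

lemma mem_primesUpTo' (n : ℕ) (q : Nat.Primes) : q ∈ primesUpTo' n ↔ (q : ℕ) ≤ n := by
  unfold primesUpTo'
  erw [Finset.mem_subtype, Finset.mem_range]
  exact Nat.lt_succ_iff

noncomputable instance fintypePS (n : ℕ) : Fintype {p : Nat.Primes // (p : ℕ) ≤ n} := by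
  classical
  exact Fintype.ofInjective
    (fun p : {p : Nat.Primes // (p : ℕ) ≤ n} => (⟨(p.1 : ℕ), Nat.lt_succ_of_le p.2⟩ : Fin (n+1)))
    (by
      intro a b h
      apply Subtype.ext; apply Subtype.ext
      simpa using congrArg Fin.val h)

variable (n : ℕ)

/-- product of prime powers indexed by the subtype -/
noncomputable def Mof (a : {p : Nat.Primes // (p : ℕ) ≤ n} → ℕ) : ℕ :=
  ∏ p : {p : Nat.Primes // (p : ℕ) ≤ n}, ((p : Nat.Primes) : ℕ) ^ a p

/-- factorization vector -/
noncomputable def eV (m : ℕ) : {p : Nat.Primes // (p : ℕ) ≤ n} → ℕ :=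
  fun p => m.factorization ((p : Nat.Primes) : ℕ)

lemma prod_primesUpTo'_eq (g : Nat.Primes → ℕ) :
    ∏ p ∈ primesUpTo' n, (p : ℕ) ^ g p
      = ∏ p : {p : Nat.Primes // (p : ℕ) ≤ n}, ((p : Nat.Primes) : ℕ) ^ g p :=
  Finset.prod_subtype (primesUpTo' n) (mem_primesUpTo' n) (fun q => (q : ℕ) ^ g q)

lemma Mof_pos (a : {p : Nat.Primes // (p : ℕ) ≤ n} → ℕ) : 1 ≤ Mof n a := by
  refine Nat.one_le_iff_ne_zero.mpr (Finset.prod_ne_zero_iff.mpr ?_)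
  intro p _
  exact pow_ne_zero _ p.1.2.pos.ne'

lemma eV_Mof (a : {p : Nat.Primes // (p : ℕ) ≤ n} → ℕ) : eV n (Mof n a) = a := by
  classical
  funext q
  show (Mof n a).factorization ((q : Nat.Primes) : ℕ) = a q
  rw [Mof, Nat.factorization_prod (fun p _ => pow_ne_zero _ p.1.2.pos.ne')]
  rw [Finsupp.finset_sum_apply]
  have : ∀ p : {p : Nat.Primes // (p : ℕ) ≤ n},
      ((((p : Nat.Primes) : ℕ)) ^ a p).factorization ((q : Nat.Primes) : ℕ)
        = if p = q then a p else 0 := by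
    intro p
    rw [Nat.Prime.factorization_pow p.1.2, Finsupp.single_apply]
    have hpq : ((((p : Nat.Primes) : ℕ)) = (((q : Nat.Primes) : ℕ))) ↔ p = q := by
      constructor
      · intro h; exact Subtype.ext (Subtype.ext h)
      · intro h; rw [h]
    simp [hpq]
  simp_rw [this]
  simp

lemma Mof_eV {m : ℕ} (hm : m ≠ 0) (hmn : m ≤ n) : Mof n (eV n m) = m := by
  classical
  have h1 : Mof n (eV n m)
      = ∏ p ∈ (Finset.range (n+1)).filter Nat.Prime, p ^ m.factorization p := by
    rw [Mof, eq_comm]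
    refine Finset.prod_bij
      (fun (x : ℕ) (hx : x ∈ (Finset.range (n+1)).filter Nat.Prime) =>
        (⟨⟨x, (Finset.mem_filter.mp hx).2⟩,
          Nat.lt_succ_iff.mp (Finset.mem_range.mp (Finset.mem_filter.mp hx).1)⟩ :
          {p : Nat.Primes // (p : ℕ) ≤ n})) ?_ ?_ ?_ ?_
    · intro a ha; exact Finset.mem_univ _
    · intro a ha b hb h
      exact congrArg (fun p : {p : Nat.Primes // (p : ℕ) ≤ n} => ((p : Nat.Primes) : ℕ)) h
    · intro p _
      refine ⟨((p : Nat.Primes) : ℕ), ?_, ?_⟩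
      · simp [Finset.mem_filter, Finset.mem_range, Nat.lt_succ_iff, p.2, p.1.2]
      · apply Subtype.ext; apply Subtype.ext; rfl
    · intro x hx; rfl
  rw [h1]
  have h2 : ∀ p ∈ (Finset.range (n+1)).filter Nat.Prime,
      p ^ m.factorization p = p ^ padicValNat p m := by
    intro p hp; rw [Nat.factorization_def m (Finset.mem_filter.mp hp).2]
  rw [Finset.prod_congr rfl h2]
  exact Nat.prod_pow_prime_padicValNat m hm (n+1) (Nat.lt_succ_of_le hmn)

lemma ofReal_prod {α : Type*} (s : Finset α) (f : α → ℝ) (hf : ∀ i ∈ s, 0 ≤ f i) :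
    ENNReal.ofReal (∏ i ∈ s, f i) = ∏ i ∈ s, ENNReal.ofReal (f i) := by
  simp_rw [ENNReal.ofReal]
  rw [Real.toNNReal_prod_of_nonneg hf, ENNReal.coe_finset_prod]

end CondIndepAux

open CondIndepAux

/-- **Theorem 3.6, eq. (3.18): conditioned independence of the prime multiplicities of `H_n`**:
the law of the vector `(α_p(H_n) : p prime, p ≤ n)` of `p`-adic valuations of `H_n` equals the
law of the independent geometric vector `(ξ_p : p prime, p ≤ n)` conditioned on the event
`𝒜_n = {∏_{p ≤ n} p^{ξ_p} ≤ n}`. -/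
theorem conditioned_independence_multiplicities
    {Ω : Type*} [MeasureSpace Ω] [IsProbabilityMeasure (ℙ : Measure Ω)]
    (n : ℕ) (hn : 21 ≤ n)
    (L : ℝ) (hL : L = ∑ j ∈ Finset.Icc 1 n, (1 : ℝ) / j)
    -- `H` has harmonic distribution on `{1, …, n}`
    (H : Ω → ℕ) (hHmeas : Measurable H)
    (hH : ∀ k : ℕ, ℙ {ω | H ω = k}
      = if k ∈ Finset.Icc 1 n then ENNReal.ofReal (1 / (L * k)) else 0)
    -- `{ξ_p}` is an independent family of geometric random variables
    (ξ : Nat.Primes → Ω → ℕ) (hξmeas : ∀ p, Measurable (ξ p))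
    (hξ : ∀ (p : Nat.Primes) (k : ℕ), ℙ {ω | ξ p ω = k}
      = ENNReal.ofReal ((1 - ((p : ℕ) : ℝ)⁻¹) * (((p : ℕ) : ℝ)⁻¹) ^ k))
    (hindep : iIndepFun ξ ℙ) :
    Measure.map (fun ω => fun p : {p : Nat.Primes // (p : ℕ) ≤ n} =>
        (H ω).factorization ((p : Nat.Primes) : ℕ)) ℙ
      = Measure.map (fun ω => fun p : {p : Nat.Primes // (p : ℕ) ≤ n} =>
          ξ (p : Nat.Primes) ω)
          (ℙ[|{ω | ∏ p ∈ primesUpTo' n, (p : ℕ) ^ ξ p ω ≤ n}]) := by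
  classical
  set X : Ω → ({p : Nat.Primes // (p : ℕ) ≤ n} → ℕ) :=
    fun ω => fun p : {p : Nat.Primes // (p : ℕ) ≤ n} =>
      (H ω).factorization ((p : Nat.Primes) : ℕ) with hX
  set Y : Ω → ({p : Nat.Primes // (p : ℕ) ≤ n} → ℕ) :=
    fun ω => fun p : {p : Nat.Primes // (p : ℕ) ≤ n} => ξ (p : Nat.Primes) ω with hY
  set A : Set Ω := {ω | ∏ p ∈ primesUpTo' n, (p : ℕ) ^ ξ p ω ≤ n} with hAdef
  set C : ℝ := ∏ p : {p : Nat.Primes // (p : ℕ) ≤ n}, (1 - (((p : Nat.Primes) : ℕ) : ℝ)⁻¹)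
    with hC
  have hXmeas : Measurable X := by
    apply measurable_pi_lambda
    intro p
    exact (measurable_of_countable (fun k : ℕ => k.factorization ((p : Nat.Primes) : ℕ))).comp
      hHmeas
  have hYmeas : Measurable Y := measurable_pi_lambda _ (fun p => hξmeas _)
  -- positivity facts
  have hn1 : 1 ≤ n := le_trans (by norm_num) hn
  have hL0 : 0 < L := by
    rw [hL]
    refine Finset.sum_pos (fun j hj => ?_) ⟨1, Finset.mem_Icc.mpr ⟨le_refl 1, hn1⟩⟩
    have : 1 ≤ j := (Finset.mem_Icc.mp hj).1
    positivity
  have hp2 : ∀ p : {p : Nat.Primes // (p : ℕ) ≤ n}, (2:ℝ) ≤ (((p : Nat.Primes) : ℕ) : ℝ) := by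
    intro p; exact_mod_cast p.1.2.two_le
  have hfac_nonneg : ∀ p : {p : Nat.Primes // (p : ℕ) ≤ n},
      0 < 1 - (((p : Nat.Primes) : ℕ) : ℝ)⁻¹ := by
    intro p
    have h1 : (1:ℝ) < (((p : Nat.Primes) : ℕ) : ℝ) := lt_of_lt_of_le one_lt_two (hp2 p)
    have := inv_lt_one_of_one_lt₀ h1
    linarith
  have hC0 : 0 < C := Finset.prod_pos (fun p _ => hfac_nonneg p)
  -- the event as a preimage
  have hA : A = Y ⁻¹' {a | Mof n a ≤ n} := by
    ext ω
    show (∏ p ∈ primesUpTo' n, (p : ℕ) ^ ξ p ω ≤ n) ↔ Mof n (Y ω) ≤ n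
    rw [prod_primesUpTo'_eq n (fun q => ξ q ω)]
    exact Iff.rfl
  have hAmeas : MeasurableSet A := by
    rw [hA]; exact hYmeas MeasurableSet.of_discrete
  -- law of X on singletons
  have hXs : ∀ a, ℙ (X ⁻¹' {a})
      = if Mof n a ≤ n then ENNReal.ofReal (1 / (L * (Mof n a : ℝ))) else 0 := by
    intro a
    have hnull : ℙ {ω | H ω ∉ Finset.Icc 1 n} = 0 := by
      have he : {ω | H ω ∉ Finset.Icc 1 n}
          = ⋃ m ∈ {m : ℕ | m ∉ Finset.Icc 1 n}, {ω | H ω = m} := by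
        ext ω; simp
      rw [he, measure_biUnion_null_iff (Set.to_countable _)]
      intro m hm
      rw [hH m, if_neg hm]
    have key : ℙ (X ⁻¹' {a}) = ℙ ((X ⁻¹' {a}) ∩ {ω | H ω ∈ Finset.Icc 1 n}) := by
      refine (measure_inter_conull ?_).symm
      rw [show {ω | H ω ∈ Finset.Icc 1 n}ᶜ = {ω | H ω ∉ Finset.Icc 1 n} from rfl]
      exact hnull
    by_cases hMa : Mof n a ≤ n
    · have hset : (X ⁻¹' {a}) ∩ {ω | H ω ∈ Finset.Icc 1 n} = {ω | H ω = Mof n a} := by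
        ext ω
        simp only [Set.mem_inter_iff, Set.mem_preimage, Set.mem_singleton_iff,
          Set.mem_setOf_eq]
        constructor
        · rintro ⟨hxa, hIc⟩
          have h1 : eV n (H ω) = a := hxa
          have hm := Finset.mem_Icc.mp hIc
          have h2 := Mof_eV n (by omega : H ω ≠ 0) hm.2
          rw [h1] at h2
          exact h2.symm
        · intro h
          refine ⟨?_, ?_⟩
          · show eV n (H ω) = a
            rw [h]; exact eV_Mof n a
          · rw [h]; exact Finset.mem_Icc.mpr ⟨Mof_pos n a, hMa⟩
      rw [key, hset, hH (Mof n a),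
        if_pos (Finset.mem_Icc.mpr ⟨Mof_pos n a, hMa⟩), if_pos hMa]
    · have hset : (X ⁻¹' {a}) ∩ {ω | H ω ∈ Finset.Icc 1 n} = ∅ := by
        ext ω
        simp only [Set.mem_inter_iff, Set.mem_preimage, Set.mem_singleton_iff,
          Set.mem_setOf_eq, Set.mem_empty_iff_false, iff_false, not_and]
        intro hxa hIc
        have h1 : eV n (H ω) = a := hxa
        have hm := Finset.mem_Icc.mp hIc
        have h2 := Mof_eV n (by omega : H ω ≠ 0) hm.2
        rw [h1] at h2
        exact hMa (h2 ▸ hm.2)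
      rw [key, hset, measure_empty, if_neg hMa]
  -- law of Y on singletons
  have hYs : ∀ a, ℙ (Y ⁻¹' {a}) = ENNReal.ofReal (C / (Mof n a : ℝ)) := by
    intro a
    set b : Nat.Primes → ℕ := fun q => if h : (q : ℕ) ≤ n then a ⟨q, h⟩ else 0 with hb
    have hbv : ∀ p : {p : Nat.Primes // (p : ℕ) ≤ n}, b p.1 = a p := by
      intro p; simp only [hb, p.2, dif_pos]
    have hYa : Y ⁻¹' {a} = ⋂ q ∈ primesUpTo' n, ξ q ⁻¹' {b q} := by
      ext ω
      simp only [Set.mem_preimage, Set.mem_singleton_iff, Set.mem_iInter]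
      constructor
      · intro h q hq
        have hq' : (q : ℕ) ≤ n := (mem_primesUpTo' n q).mp hq
        show ξ q ω = b q
        rw [hb]
        simp only [hq', dif_pos]
        exact congrFun h ⟨q, hq'⟩
      · intro h
        funext p
        have := h p.1 ((mem_primesUpTo' n p.1).mpr p.2)
        show ξ p.1 ω = a p
        rw [← hbv p]
        exact this
    have hsets : ∀ q ∈ primesUpTo' n,
        MeasurableSet[MeasurableSpace.comap (ξ q) inferInstance] (ξ q ⁻¹' {b q}) :=
      fun q _ => ⟨{b q}, MeasurableSet.of_discrete, rfl⟩
    rw [hYa, hindep.meas_biInter hsets]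
    have hterm : ∀ q ∈ primesUpTo' n, ℙ (ξ q ⁻¹' {b q})
        = ENNReal.ofReal ((1 - ((q : ℕ) : ℝ)⁻¹) * (((q : ℕ) : ℝ)⁻¹) ^ b q) := by
      intro q _
      rw [← hξ q (b q)]
      rfl
    rw [Finset.prod_congr rfl hterm,
      Finset.prod_subtype (primesUpTo' n) (mem_primesUpTo' n)
        (fun q => ENNReal.ofReal ((1 - ((q : ℕ) : ℝ)⁻¹) * (((q : ℕ) : ℝ)⁻¹) ^ b q))]
    rw [← ofReal_prod _ _ (fun p _ => by
      have := hfac_nonneg p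
      have h0 : (0:ℝ) ≤ (((p : Nat.Primes) : ℕ) : ℝ)⁻¹ := by positivity
      exact mul_nonneg (le_of_lt this) (pow_nonneg h0 _))]
    congr 1
    have : ∀ p : {p : Nat.Primes // (p : ℕ) ≤ n},
        (1 - (((p : Nat.Primes) : ℕ) : ℝ)⁻¹) * ((((p : Nat.Primes) : ℕ) : ℝ)⁻¹) ^ b p.1
          = (1 - (((p : Nat.Primes) : ℕ) : ℝ)⁻¹) * ((((p : Nat.Primes) : ℕ) : ℝ) ^ a p)⁻¹ := by
      intro p
      rw [hbv p, inv_pow]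
    rw [Finset.prod_congr rfl (fun p _ => this p), Finset.prod_mul_distrib, ← hC,
      Finset.prod_inv_distrib, div_eq_mul_inv]
    congr 2
    rw [Mof]
    push_cast
    rfl
  -- probability of the event
  have hT : {a : {p : Nat.Primes // (p : ℕ) ≤ n} → ℕ | Mof n a ≤ n}
      = ⋃ m ∈ Finset.Icc 1 n, {eV n m} := by
    ext a
    simp only [Set.mem_setOf_eq, Set.mem_iUnion, Set.mem_singleton_iff]
    constructor
    · intro h
      exact ⟨Mof n a, Finset.mem_Icc.mpr ⟨Mof_pos n a, h⟩, (eV_Mof n a).symm⟩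
    · rintro ⟨m, hm, rfl⟩
      have hm' := Finset.mem_Icc.mp hm
      rw [Mof_eV n (by omega) hm'.2]
      exact hm'.2
  have hPA : ℙ A = ENNReal.ofReal (C * L) := by
    rw [hA, hT]
    rw [Set.preimage_iUnion₂]
    rw [measure_biUnion_finset ?_ (fun m _ => hYmeas MeasurableSet.of_discrete)]
    · have hterm : ∀ m ∈ Finset.Icc 1 n,
          ℙ (Y ⁻¹' {eV n m}) = ENNReal.ofReal (C * (1 / (m : ℝ))) := by
        intro m hm
        have hm' := Finset.mem_Icc.mp hm
        rw [hYs (eV n m), Mof_eV n (by omega) hm'.2]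
        rw [div_eq_mul_inv, one_div]
      rw [Finset.sum_congr rfl hterm,
        ← ENNReal.ofReal_sum_of_nonneg (fun m hm => by
          have hm' := Finset.mem_Icc.mp hm
          have : (0:ℝ) < (m:ℝ) := by exact_mod_cast hm'.1
          positivity)]
      rw [← Finset.mul_sum, ← hL]
    · intro m hm m' hm' hne
      simp only [Function.onFun]
      refine Set.disjoint_left.mpr ?_
      intro x hx hx'
      simp only [Set.mem_preimage, Set.mem_singleton_iff] at hx hx'
      apply hne
      have h1 := Finset.mem_Icc.mp hm
      have h2 := Finset.mem_Icc.mp hm'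
      have : eV n m = eV n m' := by rw [← hx, ← hx']
      calc m = Mof n (eV n m) := (Mof_eV n (by omega) h1.2).symm
        _ = Mof n (eV n m') := by rw [this]
        _ = m' := Mof_eV n (by omega) h2.2
  -- conclude
  have hCL0 : 0 < C * L := mul_pos hC0 hL0
  rw [MeasureTheory.Measure.ext_iff_singleton]
  intro a
  rw [Measure.map_apply hXmeas MeasurableSet.of_discrete,
    Measure.map_apply hYmeas MeasurableSet.of_discrete,
    cond_apply hAmeas, hXs a, hPA]
  by_cases hMa : Mof n a ≤ n
  · have hsub : A ∩ Y ⁻¹' {a} = Y ⁻¹' {a} := by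
      rw [hA]
      refine Set.inter_eq_self_of_subset_right ?_
      intro x hx
      simp only [Set.mem_preimage, Set.mem_singleton_iff] at hx
      show Mof n (Y x) ≤ n
      rw [hx]; exact hMa
    rw [hsub, hYs a, if_pos hMa]
    have hM0 : (0:ℝ) < (Mof n a : ℝ) := by exact_mod_cast Mof_pos n a
    have key : C / (Mof n a : ℝ) = (C * L) * (1 / (L * (Mof n a : ℝ))) := by
      field_simp
    rw [key, ENNReal.ofReal_mul hCL0.le, ← mul_assoc,
      ENNReal.inv_mul_cancel (ENNReal.ofReal_pos.mpr hCL0).ne' ENNReal.ofReal_ne_top,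
      one_mul]
  · have hempty : A ∩ Y ⁻¹' {a} = ∅ := by
      rw [hA]
      ext x
      simp only [Set.mem_inter_iff, Set.mem_preimage, Set.mem_singleton_iff,
        Set.mem_setOf_eq, Set.mem_empty_iff_false, iff_false, not_and]
      intro hx hx'
      rw [hx'] at hx
      exact hMa hx
    rw [hempty, measure_empty, mul_zero, if_neg hMa]
end

section
/- Let n ≥ 21 and let ψ : ℕ → ℝ be an additive arithmetic function (ψ(jk) = ψ(j) + ψ(k) whenever j and k are coprime). Let H_n be a random variable on {1, …, n} with P[H_n = k] = 1/(L_n k), L_n = Σ_{j=1}^n 1/j. Let {ξ_p}_{p prime} be independent geometric random variables with P[ξ_p = k] = (1 − p⁻¹) p^{−k} for k ∈ ℕ₀, and let 𝒜_n be the event {∏_{p prime, p ≤ n} p^{ξ_p} ≤ n}. Then the law of ψ(H_n) equals the conditional law of Σ_{p prime, p ≤ n} ψ(p^{ξ_p}) given 𝒜_n. -/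
open MeasureTheory ProbabilityTheory Finset
open scoped ProbabilityTheory ENNReal

lemma cia_psi_one (ψ : ℕ → ℝ) (hadd : ∀ j k : ℕ, Nat.Coprime j k → ψ (j * k) = ψ j + ψ k) :
    ψ 1 = 0 := by
  have := hadd 1 1 (by norm_num)
  simp at this; linarith

lemma cia_psi_prod (ψ : ℕ → ℝ) (hadd : ∀ j k : ℕ, Nat.Coprime j k → ψ (j * k) = ψ j + ψ k)
    (s : Finset Nat.Primes) (e : Nat.Primes → ℕ) :
    ψ (∏ p ∈ s, (p : ℕ) ^ e p) = ∑ p ∈ s, ψ ((p : ℕ) ^ e p) := by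
  induction s using Finset.cons_induction with
  | empty => simpa using cia_psi_one ψ hadd
  | cons p s hp ih =>
    rw [Finset.prod_cons, Finset.sum_cons, hadd, ih]
    refine Nat.Coprime.prod_right fun q hq => Nat.Coprime.pow _ _ ?_
    exact (Nat.coprime_primes p.prop q.prop).mpr (fun h => hp (Subtype.ext h ▸ hq))

lemma cia_prod_coe {M : Type*} [CommMonoid M] (n : ℕ) (G : ℕ → M) :
    ∏ p ∈ primesUpTo' n, G (p : ℕ)
      = ∏ q ∈ (Finset.range (n + 1)).filter Nat.Prime, G q := by
  rw [← Finset.subtype_map Nat.Prime, Finset.prod_map]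
  rfl

lemma cia_prod_factorization (n m : ℕ) (hm1 : 1 ≤ m) (hmn : m ≤ n) :
    ∏ p ∈ primesUpTo' n, (p : ℕ) ^ (m.factorization (p : ℕ)) = m := by
  rw [cia_prod_coe n (fun q => q ^ m.factorization q)]
  have hm0 : m ≠ 0 := by omega
  have hsub : m.primeFactors ⊆ (Finset.range (n + 1)).filter Nat.Prime := by
    intro q hq
    rw [Nat.mem_primeFactors] at hq
    refine Finset.mem_filter.mpr ⟨Finset.mem_range.mpr ?_, hq.1⟩
    have : q ≤ m := Nat.le_of_dvd (by omega) hq.2.1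
    omega
  rw [← Finset.prod_subset hsub (fun q _ hq => ?_)]
  · conv_rhs => rw [← Nat.factorization_prod_pow_eq_self hm0]
    rw [Finsupp.prod, Nat.support_factorization]
  · rw [Finsupp.notMem_support_iff.mp (by rwa [Nat.support_factorization]), pow_zero]

lemma cia_factorization_prod (n : ℕ) (e : Nat.Primes → ℕ) (p : Nat.Primes)
    (hp : p ∈ primesUpTo' n) :
    (∏ q ∈ primesUpTo' n, (q : ℕ) ^ e q).factorization (p : ℕ) = e p := by
  rw [Nat.factorization_prod (fun q _ => pow_ne_zero _ q.prop.pos.ne')]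
  rw [Finset.sum_apply']
  have : ∀ q ∈ primesUpTo' n, (((q : ℕ) ^ e q).factorization) (p : ℕ)
      = if q = p then e q else 0 := by
    intro q _
    rw [q.prop.factorization_pow, Finsupp.single_apply]
    by_cases h : q = p
    · simp [h]
    · simp [h, show (q : ℕ) ≠ (p : ℕ) from fun hc => h (Subtype.ext hc)]
  rw [Finset.sum_congr rfl this, Finset.sum_ite_eq' _ p e, if_pos hp]
/-- **Theorem 3.6, eq. (3.19)**: for an additive function `ψ`, the law of `ψ(H_n)` equals the
law of `Σ_{p ≤ n} ψ(p^{ξ_p})` conditioned on the event `𝒜_n = {∏_{p ≤ n} p^{ξ_p} ≤ n}`. -/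
theorem conditioned_independence_additive
    {Ω : Type*} [MeasureSpace Ω] [IsProbabilityMeasure (ℙ : Measure Ω)]
    (n : ℕ) (hn : 21 ≤ n)
    (ψ : ℕ → ℝ)
    (hadd : ∀ j k : ℕ, Nat.Coprime j k → ψ (j * k) = ψ j + ψ k)
    (L : ℝ) (hL : L = ∑ j ∈ Finset.Icc 1 n, (1 : ℝ) / j)
    -- `H` has harmonic distribution on `{1, …, n}`
    (H : Ω → ℕ) (hHmeas : Measurable H)
    (hH : ∀ k : ℕ, ℙ {ω | H ω = k}
      = if k ∈ Finset.Icc 1 n then ENNReal.ofReal (1 / (L * k)) else 0)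
    -- `{ξ_p}` is an independent family of geometric random variables
    (ξ : Nat.Primes → Ω → ℕ) (hξmeas : ∀ p, Measurable (ξ p))
    (hξ : ∀ (p : Nat.Primes) (k : ℕ), ℙ {ω | ξ p ω = k}
      = ENNReal.ofReal ((1 - ((p : ℕ) : ℝ)⁻¹) * (((p : ℕ) : ℝ)⁻¹) ^ k))
    (hindep : iIndepFun ξ ℙ) :
    Measure.map (fun ω => ψ (H ω)) ℙ
      = Measure.map (fun ω => ∑ p ∈ primesUpTo' n, ψ ((p : ℕ) ^ ξ p ω))
          (ℙ[|{ω | ∏ p ∈ primesUpTo' n, (p : ℕ) ^ ξ p ω ≤ n}]) := by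
  set P := primesUpTo' n with hP
  set X : Ω → ℕ := fun ω => ∏ p ∈ P, (p : ℕ) ^ ξ p ω with hX
  set A : Set Ω := {ω | X ω ≤ n} with hA
  set C : ℝ := ∏ p ∈ P, (1 - ((p : ℕ) : ℝ)⁻¹) with hC
  -- basic measurability
  have hXmeas : Measurable X :=
    Finset.measurable_prod _ (fun p _ => Measurable.of_discrete.comp (hξmeas p))
  have hAmeas : MeasurableSet A :=
    hXmeas (MeasurableSet.of_discrete (s := {m : ℕ | m ≤ n}))
  have hψm : Measurable ψ := Measurable.of_discrete
  -- X ≥ 1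
  have hX1 : ∀ ω, 1 ≤ X ω := fun ω =>
    Finset.one_le_prod' (fun p _ => Nat.one_le_pow _ _ p.prop.pos)
  -- positivity of C and L
  have hfpos : ∀ p : Nat.Primes, p ∈ P → (0:ℝ) < 1 - ((p : ℕ) : ℝ)⁻¹ := by
    intro p _
    have h2 : (2:ℝ) ≤ ((p : ℕ) : ℝ) := by exact_mod_cast p.prop.two_le
    have : ((p : ℕ) : ℝ)⁻¹ < 1 := by
      rw [inv_lt_one_iff₀]; right; linarith
    linarith
  have hCpos : 0 < C := Finset.prod_pos hfpos
  have hLpos : 0 < L := by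
    rw [hL]
    refine Finset.sum_pos (fun j hj => ?_) ⟨1, by simp; omega⟩
    have : 1 ≤ j := (Finset.mem_Icc.mp hj).1
    positivity
  -- description of {X = m}
  have hXset : ∀ m : ℕ, 1 ≤ m → m ≤ n →
      {ω | X ω = m} = ⋂ p ∈ P, ξ p ⁻¹' {m.factorization (p : ℕ)} := by
    intro m hm1 hmn
    ext ω
    simp only [Set.mem_setOf_eq, Set.mem_iInter, Set.mem_preimage, Set.mem_singleton_iff]
    constructor
    · intro h p hp
      have h2 : (X ω).factorization (p : ℕ) = ξ p ω :=
        cia_factorization_prod n (fun q => ξ q ω) p hp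
      rw [h] at h2
      exact h2.symm
    · intro h
      rw [hX]
      calc ∏ p ∈ P, (p : ℕ) ^ ξ p ω
          = ∏ p ∈ P, (p : ℕ) ^ (m.factorization (p : ℕ)) :=
            Finset.prod_congr rfl (fun p hp => by rw [h p hp])
        _ = m := cia_prod_factorization n m hm1 hmn
  -- probability of {X = m}
  have hXprob : ∀ m : ℕ, m ∈ Finset.Icc 1 n →
      ℙ {ω | X ω = m} = ENNReal.ofReal (C * (1 / (m:ℝ))) := by
    intro m hm
    obtain ⟨hm1, hmn⟩ := Finset.mem_Icc.mp hm
    rw [hXset m hm1 hmn]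
    rw [hindep.meas_biInter (fun p _ =>
      ⟨{m.factorization (p : ℕ)}, measurableSet_singleton _, rfl⟩)]
    have heach : ∀ p ∈ P, ℙ (ξ p ⁻¹' {m.factorization (p : ℕ)})
        = ENNReal.ofReal ((1 - ((p : ℕ) : ℝ)⁻¹) * (((p : ℕ) : ℝ)⁻¹) ^ (m.factorization (p:ℕ))) := by
      intro p _
      rw [← hξ p (m.factorization (p : ℕ))]
      rfl
    rw [Finset.prod_congr rfl heach,
      ← ENNReal.ofReal_prod_of_nonneg (fun p hp =>
        mul_nonneg (le_of_lt (hfpos p hp)) (by positivity))]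
    congr 1
    rw [Finset.prod_mul_distrib, ← hC]
    congr 1
    have hcast : ((∏ p ∈ P, (p : ℕ) ^ (m.factorization (p : ℕ)) : ℕ) : ℝ) = (m : ℝ) := by
      exact_mod_cast congrArg (Nat.cast : ℕ → ℝ) (cia_prod_factorization n m hm1 hmn)
    push_cast at hcast
    rw [one_div, ← hcast]
    rw [← Finset.prod_inv_distrib]
    exact Finset.prod_congr rfl (fun p _ => by rw [inv_pow])
  -- decomposition of A
  have hAunion : A = ⋃ m ∈ Finset.Icc 1 n, {ω | X ω = m} := by
    ext ω
    simp only [hA, Set.mem_setOf_eq, Set.mem_iUnion, Finset.mem_Icc]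
    constructor
    · intro h; exact ⟨X ω, ⟨⟨hX1 ω, h⟩, rfl⟩⟩
    · rintro ⟨m, ⟨_, hmn⟩, rfl⟩; exact hmn
  have hdisj : (↑(Finset.Icc 1 n) : Set ℕ).PairwiseDisjoint
      (fun m => {ω | X ω = m}) := by
    intro m₁ h₁ m₂ h₂ hne
    refine Set.disjoint_left.mpr (fun ω hω₁ hω₂ => hne ?_)
    simp only [Set.mem_setOf_eq] at hω₁ hω₂
    rw [← hω₁, ← hω₂]
  have hPA : ℙ A = ENNReal.ofReal (C * L) := by
    rw [hAunion, measure_biUnion_finset hdisj (fun m _ =>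
      show MeasurableSet {ω | X ω = m} from hXmeas (measurableSet_singleton m))]
    rw [Finset.sum_congr rfl hXprob,
      ← ENNReal.ofReal_sum_of_nonneg (fun m hm => by positivity), ← Finset.mul_sum, ← hL]
  have hPApos : ℙ A ≠ 0 := by
    rw [hPA]; simp only [ne_eq, ENNReal.ofReal_eq_zero, not_le]; positivity
  -- the key distributional identity on ℕ
  have hkey : Measure.map H ℙ = Measure.map X (ℙ[|A]) := by
    rw [Measure.ext_iff_singleton]
    intro k
    rw [Measure.map_apply hHmeas (measurableSet_singleton k),
      Measure.map_apply hXmeas (measurableSet_singleton k),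
      cond_apply hAmeas]
    have hHk : H ⁻¹' {k} = {ω | H ω = k} := rfl
    rw [hHk, hH k]
    by_cases hk : k ∈ Finset.Icc 1 n
    · obtain ⟨hk1, hkn⟩ := Finset.mem_Icc.mp hk
      have hsub : X ⁻¹' {k} ⊆ A := by
        intro ω hω
        simp only [Set.mem_preimage, Set.mem_singleton_iff] at hω
        simp only [hA, Set.mem_setOf_eq, hω]; exact hkn
      rw [Set.inter_eq_self_of_subset_right hsub, if_pos hk]
      have hXk : X ⁻¹' {k} = {ω | X ω = k} := rfl
      rw [hXk, hXprob k hk, hPA,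
        ← ENNReal.ofReal_inv_of_pos (by positivity),
        ← ENNReal.ofReal_mul (by positivity)]
      congr 1
      have hkR : (0:ℝ) < (k:ℝ) := by exact_mod_cast hk1
      have hk0 : (k:ℝ) ≠ 0 := ne_of_gt hkR
      field_simp
    · have hempty : A ∩ X ⁻¹' {k} = ∅ := by
        ext ω
        simp only [Set.mem_inter_iff, hA, Set.mem_setOf_eq, Set.mem_preimage,
          Set.mem_singleton_iff, Set.mem_empty_iff_false, iff_false, not_and]
        intro hω hXω
        rw [Finset.mem_Icc] at hk
        push_neg at hk
        rcases Nat.lt_or_ge k 1 with h1 | h1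
        · have := hX1 ω; omega
        · have := hk h1; omega
      rw [hempty, if_neg hk, measure_empty, mul_zero]
  -- assemble
  have hfun : (fun ω => ∑ p ∈ P, ψ ((p : ℕ) ^ ξ p ω)) = ψ ∘ X := by
    funext ω
    exact (cia_psi_prod ψ hadd P (fun p => ξ p ω)).symm
  show Measure.map (ψ ∘ H) ℙ = Measure.map (fun ω => ∑ p ∈ P, ψ ((p : ℕ) ^ ξ p ω)) (ℙ[|A])
  rw [hfun, ← Measure.map_map hψm hHmeas, hkey, Measure.map_map hψm hXmeas]
end

section
/- Let n ≥ 21. Let H_n be a random variable on {1, …, n} with P[H_n = k] = 1/(L_n k), L_n = Σ_{j=1}^n 1/j, and let {Q(k)}_{k ≥ 1} be random variables, independent of H_n, such that Q(k) is uniformly distributed on {1} ∪ {p prime : p ≤ k}. Then P[Q(⌊n/H_n⌋) divides H_n] ≤ 6.4 · log(log n)/log n. -/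
set_option maxHeartbeats 1000000

open MeasureTheory ProbabilityTheory Finset
open scoped ProbabilityTheory ENNReal

/-- The set of primes `p ≤ n`, as a finset. -/
noncomputable def primesUpTo (n : ℕ) : Finset ℕ := (Finset.range (n + 1)).filter Nat.Prime

lemma cheb (m : ℕ) (hm : 2 ≤ m) :
    Real.log 2 * ((m : ℝ) - 1) / Real.log ((m : ℝ) + 1) ≤ ((primesUpTo m).card + 1 : ℝ) := by
  set j := m / 2 with hj
  have hmod := Nat.div_add_mod m 2
  have hmod2 := Nat.mod_lt m (show 0 < 2 by norm_num)
  have hj1 : 1 ≤ j := by omega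
  have h2j : 2 * j ≤ m := by omega
  have hm2j : m ≤ 2 * j + 1 := by omega
  set C := Nat.centralBinom j with hC
  have hCdef : C = (2 * j).choose j := rfl
  have hCne : C ≠ 0 := Nat.centralBinom_ne_zero j
  have hfac : ∀ p : ℕ, p ^ C.factorization p ≤ 2 * j := by
    intro p
    rw [hCdef]
    exact Nat.pow_factorization_choose_le (by omega)
  have hsub : C.primeFactors ⊆ primesUpTo m := by
    intro p hp
    have hprime := Nat.prime_of_mem_primeFactors hp
    have hsup : C.factorization p ≠ 0 := by
      rwa [← Finsupp.mem_support_iff, Nat.support_factorization]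
    have hp2j : p ≤ 2 * j := by
      calc p = p ^ 1 := (pow_one p).symm
        _ ≤ p ^ C.factorization p := Nat.pow_le_pow_right hprime.one_lt.le (by omega)
        _ ≤ 2 * j := hfac p
    simp only [primesUpTo, mem_filter, mem_range]
    exact ⟨by omega, hprime⟩
  have hCle : C ≤ (2 * j + 1) ^ (primesUpTo m).card := by
    have h1 : C = ∏ p ∈ C.primeFactors, p ^ C.factorization p := by
      conv_lhs => rw [← Nat.factorization_prod_pow_eq_self hCne]
      rfl
    calc C = ∏ p ∈ C.primeFactors, p ^ C.factorization p := h1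
      _ ≤ ∏ _p ∈ C.primeFactors, (2 * j + 1) := by
          apply Finset.prod_le_prod'
          intro p hp
          have := hfac p
          omega
      _ = (2 * j + 1) ^ C.primeFactors.card := Finset.prod_const _
      _ ≤ (2 * j + 1) ^ (primesUpTo m).card :=
          Nat.pow_le_pow_right (by omega) (Finset.card_le_card hsub)
  have hmain : (4 : ℕ) ^ j ≤ (2 * j + 1) ^ ((primesUpTo m).card + 1) := by
    calc (4:ℕ) ^ j ≤ 2 * j * C := Nat.four_pow_le_two_mul_self_mul_centralBinom j hj1
      _ ≤ (2 * j + 1) * (2 * j + 1) ^ (primesUpTo m).card :=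
          Nat.mul_le_mul (by omega) hCle
      _ = (2 * j + 1) ^ ((primesUpTo m).card + 1) := by ring
  have hreal : ((4:ℝ)) ^ j ≤ ((2 * j + 1 : ℕ) : ℝ) ^ ((primesUpTo m).card + 1) := by
    exact_mod_cast hmain
  have hlog : (j : ℝ) * Real.log 4 ≤ ((primesUpTo m).card + 1 : ℝ) * Real.log (2 * (j:ℝ) + 1) := by
    have h4 : (0:ℝ) < 4 ^ j := by positivity
    have := Real.log_le_log h4 hreal
    rw [Real.log_pow, Real.log_pow] at this
    push_cast at this ⊢
    convert this using 3 <;> push_cast <;> ring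
  have hlog4 : Real.log 4 = 2 * Real.log 2 := by
    rw [show (4:ℝ) = 2 ^ 2 by norm_num, Real.log_pow]; push_cast; ring
  have hpos : 0 < Real.log ((m:ℝ) + 1) := by
    apply Real.log_pos
    have : (2:ℝ) ≤ m := by exact_mod_cast hm
    linarith
  rw [div_le_iff₀ hpos]
  have hle1 : Real.log ((2:ℝ) * j + 1) ≤ Real.log ((m:ℝ) + 1) := by
    apply Real.log_le_log (by positivity)
    have h2 : (2 * (j:ℝ)) ≤ m := by exact_mod_cast h2j
    linarith
  have hl2 : (0:ℝ) ≤ Real.log 2 := Real.log_nonneg (by norm_num)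
  have hm1 : ((m:ℝ) - 1) ≤ 2 * (j:ℝ) := by
    have : (m:ℝ) ≤ 2 * (j:ℝ) + 1 := by exact_mod_cast hm2j
    linarith
  have hcard : (0:ℝ) ≤ ((primesUpTo m).card + 1 : ℝ) := by positivity
  calc Real.log 2 * ((m:ℝ) - 1) ≤ Real.log 2 * (2 * (j:ℝ)) := by nlinarith
    _ = (j:ℝ) * Real.log 4 := by rw [hlog4]; ring
    _ ≤ ((primesUpTo m).card + 1 : ℝ) * Real.log (2 * (j:ℝ) + 1) := hlog
    _ ≤ ((primesUpTo m).card + 1 : ℝ) * Real.log ((m:ℝ) + 1) := by nlinarith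

lemma D_le_pi (k m : ℕ) :
    (k.divisors ∩ insert 1 (primesUpTo m)).card ≤ (primesUpTo m).card + 1 := by
  calc (k.divisors ∩ insert 1 (primesUpTo m)).card ≤ (insert 1 (primesUpTo m)).card :=
        Finset.card_le_card (Finset.inter_subset_right)
    _ ≤ (primesUpTo m).card + 1 := Finset.card_insert_le _ _

lemma D_le_omega (k m : ℕ) (hk : k ≠ 0) :
    (k.divisors ∩ insert 1 (primesUpTo m)).card ≤ k.primeFactors.card + 1 := by
  have hsub : k.divisors ∩ insert 1 (primesUpTo m) ⊆ insert 1 k.primeFactors := by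
    intro j hj
    simp only [Finset.mem_inter, Nat.mem_divisors, Finset.mem_insert, primesUpTo,
      Finset.mem_filter, Finset.mem_range] at hj
    obtain ⟨⟨hdvd, -⟩, hj2⟩ := hj
    rcases hj2 with h1 | ⟨-, hp⟩
    · subst h1; exact Finset.mem_insert_self _ _
    · exact Finset.mem_insert_of_mem (Nat.mem_primeFactors.2 ⟨hp, hdvd, hk⟩)
  calc _ ≤ (insert 1 k.primeFactors).card := Finset.card_le_card hsub
    _ ≤ k.primeFactors.card + 1 := Finset.card_insert_le _ _

lemma omega_log (k : ℕ) (hk : 1 ≤ k) :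
    (k.primeFactors.card : ℝ) * Real.log 2 ≤ Real.log k := by
  have h2 : (2:ℕ) ^ k.primeFactors.card ≤ k := by
    calc (2:ℕ) ^ k.primeFactors.card ≤ ∏ p ∈ k.primeFactors, p := by
          apply Finset.pow_card_le_prod
          intro p hp
          exact (Nat.prime_of_mem_primeFactors hp).two_le
      _ ≤ k := Nat.le_of_dvd (by omega) (Nat.prod_primeFactors_dvd k)
  have : ((2:ℝ)) ^ k.primeFactors.card ≤ (k:ℝ) := by exact_mod_cast h2
  have := Real.log_le_log (by positivity) this
  rwa [Real.log_pow] at this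

lemma numeric_head (A l t : ℝ) (hA16 : 16 ≤ A) (hl9 : (0.6931471803:ℝ) < l)
    (hl9' : l < 0.6931471808) (htge : A^3 - 1 ≤ t) (X : ℝ) (hX0 : 0 ≤ X) (hX : X ≤ A + l) :
    (A / l + 1) * (X / (l * (t - 1))) ≤ 2.5 / A := by
  have hApos : (0:ℝ) < A := by linarith
  have hlpos : (0:ℝ) < l := by linarith
  have hA3 : (4096:ℝ) ≤ A^3 := by
    have h1 : (256:ℝ) ≤ A^2 := by nlinarith
    nlinarith [mul_le_mul hA16 h1 (by norm_num) (by linarith : (0:ℝ) ≤ A)]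
  have hT1pos : (0:ℝ) < t - 1 := by linarith
  have e1 : (A / l + 1) * (X / (l * (t - 1))) ≤ (A / l + 1) * ((A + l) / (l * (t - 1))) := by
    apply mul_le_mul_of_nonneg_left _ (by positivity)
    exact div_le_div_of_nonneg_right hX (by positivity)
  have e2 : (A / l + 1) * ((A + l) / (l * (t - 1))) = (A + l)^2 / (l^2 * (t - 1)) := by
    field_simp
  have hl2lb : (0.48045:ℝ) ≤ l^2 := by nlinarith
  have e3 : (A + l)^2 / (l^2 * (t - 1)) ≤ 2.5 / A := by
    rw [div_le_div_iff₀ (by positivity) hApos]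
    have hT3 : A^3 - 2 ≤ t - 1 := by linarith
    have h16 : (0:ℝ) ≤ A - 16 := by linarith
    have key : (A + l)^2 * A ≤ 1.2 * (A^3 - 2) := by
      nlinarith [mul_nonneg h16 (sq_nonneg A), mul_nonneg (mul_nonneg h16 h16) h16,
        mul_nonneg h16 h16]
    have h2 : (1.2:ℝ) * (A^3 - 2) ≤ 2.5 * (l^2 * (t - 1)) := by nlinarith
    linarith
  linarith [e1, e2.le, e2.ge, e3]

lemma numeric_final (A l B : ℝ) (hApos : 0 < A) (hl9 : (0.6931471803:ℝ) < l)
    (hB4 : 4 * l ≤ B) :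
    2.5 / A + (1 + l + 3*B) / A ≤ 6.4 * B / A := by
  rw [← add_div, div_le_div_iff₀ hApos hApos]
  have h1 : 3.5 + l ≤ 3.4 * B := by linarith
  have hB0 : 0 < B := by linarith
  nlinarith


theorem prob_eq
    {Ω : Type*} [MeasureSpace Ω] [IsProbabilityMeasure (ℙ : Measure Ω)]
    (n : ℕ) (hn : 21 ≤ n)
    (L : ℝ)
    (H : Ω → ℕ) (hHmeas : Measurable H)
    (hH : ∀ k : ℕ, ℙ {ω | H ω = k}
      = if k ∈ Finset.Icc 1 n then ENNReal.ofReal (1 / (L * k)) else 0)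
    (Q : ℕ → Ω → ℕ) (hQmeas : ∀ k, Measurable (Q k))
    (hQ : ∀ k : ℕ, 1 ≤ k → ∀ j : ℕ, ℙ {ω | Q k ω = j}
      = if j ∈ insert 1 (primesUpTo k) then (((primesUpTo k).card : ℝ≥0∞) + 1)⁻¹ else 0)
    (hindep : IndepFun (fun ω => fun k => Q k ω) H ℙ) :
    ℙ {ω | Q (n / H ω) ω ∣ H ω}
      = ∑ k ∈ Finset.Icc 1 n, ENNReal.ofReal (1 / (L * k)) *
          (((k.divisors ∩ insert 1 (primesUpTo (n / k))).card : ℝ≥0∞) *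
            (((primesUpTo (n / k)).card : ℝ≥0∞) + 1)⁻¹) := by
  classical
  set E : Set Ω := {ω | Q (n / H ω) ω ∣ H ω} with hE
  set A : ℕ → Set Ω := fun k => {ω | Q (n / k) ω ∣ k} with hA
  set S : ℕ → Set Ω := fun k => {ω | H ω = k} ∩ A k with hS
  -- null set where H is outside range
  have hnull : ℙ {ω | H ω ∉ Finset.Icc 1 n} = 0 := by
    have : {ω | H ω ∉ Finset.Icc 1 n} = ⋃ (k : ℕ) (_ : k ∉ Finset.Icc 1 n), {ω | H ω = k} := by
      ext ω
      simp only [Set.mem_setOf_eq, Set.mem_iUnion]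
      exact ⟨fun h => ⟨H ω, h, rfl⟩, fun ⟨k, hk, hkk⟩ => hkk ▸ hk⟩
    rw [this]
    apply measure_iUnion_null
    intro k
    by_cases hk : k ∈ Finset.Icc 1 n
    · simp [hk]
    · apply measure_iUnion_null
      intro _
      rw [hH k, if_neg hk]
  -- E equals the union up to null sets
  have hmeasA : ∀ k, MeasurableSet (A k) := fun k =>
    (hQmeas (n / k)) (MeasurableSet.of_discrete (s := {d : ℕ | d ∣ k}))
  have hmeasHk : ∀ k : ℕ, MeasurableSet {ω | H ω = k} := fun k =>
    hHmeas (MeasurableSet.of_discrete (s := {k}))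
  have hmeasS : ∀ k, MeasurableSet (S k) := fun k => (hmeasHk k).inter (hmeasA k)
  have hunion : ℙ E = ℙ (⋃ k ∈ Finset.Icc 1 n, S k) := by
    apply le_antisymm
    · calc ℙ E ≤ ℙ ((⋃ k ∈ Finset.Icc 1 n, S k) ∪ {ω | H ω ∉ Finset.Icc 1 n}) := by
            apply measure_mono
            intro ω hω
            by_cases hk : H ω ∈ Finset.Icc 1 n
            · left
              exact Set.mem_biUnion hk ⟨rfl, hω⟩
            · right; exact hk
        _ ≤ ℙ (⋃ k ∈ Finset.Icc 1 n, S k) + ℙ {ω | H ω ∉ Finset.Icc 1 n} := measure_union_le _ _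
        _ = ℙ (⋃ k ∈ Finset.Icc 1 n, S k) := by rw [hnull, add_zero]
    · apply measure_mono
      intro ω hω
      rw [Set.mem_iUnion₂] at hω
      obtain ⟨k, hk, hHk, hAk⟩ := hω
      show Q (n / H ω) ω ∣ H ω
      rw [show H ω = k from hHk]
      exact hAk
  -- disjoint union
  have hdisj : (Finset.Icc 1 n : Set ℕ).PairwiseDisjoint S := by
    intro a ha b hb hab
    apply Set.disjoint_left.2
    rintro ω ⟨ha', -⟩ ⟨hb', -⟩
    exact hab (ha'.symm.trans hb')
  have hsum : ℙ E = ∑ k ∈ Finset.Icc 1 n, ℙ (S k) := by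
    rw [hunion, measure_biUnion_finset hdisj (fun k _ => hmeasS k)]
  -- independence factorization
  have hindep' : ∀ k : ℕ, ℙ (S k) = ℙ {ω | H ω = k} * ℙ (A k) := by
    intro k
    have hms : MeasurableSet {g : ℕ → ℕ | g (n / k) ∣ k} := by
      have h0 : {g : ℕ → ℕ | g (n / k) ∣ k} = (fun g : ℕ → ℕ => g (n / k)) ⁻¹' {d | d ∣ k} := rfl
      rw [h0]
      exact measurable_pi_apply _ (MeasurableSet.of_discrete (s := {d : ℕ | d ∣ k}))
    have := hindep.measure_inter_preimage_eq_mul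
      {g : ℕ → ℕ | g (n / k) ∣ k} ({k} : Set ℕ) hms (MeasurableSet.of_discrete)
    have heq : (fun ω => fun k => Q k ω) ⁻¹' {g : ℕ → ℕ | g (n / k) ∣ k} = A k := rfl
    have heq2 : H ⁻¹' ({k} : Set ℕ) = {ω | H ω = k} := rfl
    rw [heq, heq2] at this
    rw [hS]
    simp only []
    rw [Set.inter_comm] at this
    rw [this, mul_comm]
  -- compute ℙ (A k) for k in range
  have hAk : ∀ k ∈ Finset.Icc 1 n, ℙ (A k)
      = ((k.divisors ∩ insert 1 (primesUpTo (n / k))).card : ℝ≥0∞) *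
          (((primesUpTo (n / k)).card : ℝ≥0∞) + 1)⁻¹ := by
    intro k hk
    rw [Finset.mem_Icc] at hk
    have hk1 : 1 ≤ k := hk.1
    have hm1 : 1 ≤ n / k := (Nat.one_le_div_iff (by omega)).2 hk.2
    have hAeq : A k = ⋃ j ∈ k.divisors, {ω | Q (n / k) ω = j} := by
      ext ω
      simp only [hA, Set.mem_setOf_eq, Set.mem_iUnion₂, Nat.mem_divisors]
      constructor
      · intro h
        exact ⟨Q (n / k) ω, ⟨h, by omega⟩, rfl⟩
      · rintro ⟨j, ⟨hj, -⟩, hjq⟩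
        rw [hjq]; exact hj
    rw [hAeq, measure_biUnion_finset]
    · have : ∀ j ∈ k.divisors, ℙ {ω | Q (n / k) ω = j}
          = if j ∈ insert 1 (primesUpTo (n / k)) then
              (((primesUpTo (n / k)).card : ℝ≥0∞) + 1)⁻¹ else 0 := fun j _ => hQ (n / k) hm1 j
      rw [Finset.sum_congr rfl this, Finset.sum_ite_mem, Finset.sum_const, nsmul_eq_mul]
    · intro a ha b hb hab
      apply Set.disjoint_left.2
      rintro ω ha' hb'
      exact hab (ha'.symm.trans hb')
    · exact fun j _ => (hQmeas (n / k)) (MeasurableSet.of_discrete (s := {j}))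
  rw [hsum]
  apply Finset.sum_congr rfl
  intro k hk
  rw [hindep' k, hAk k hk, hH k, if_pos hk]

theorem real_est (n : ℕ) (hn : 21 ≤ n) (L : ℝ)
    (hL : L = ∑ j ∈ Finset.Icc 1 n, (1 : ℝ) / j) :
    ∑ k ∈ Finset.Icc 1 n, 1 / (L * k) *
        (((k.divisors ∩ insert 1 (primesUpTo (n / k))).card : ℝ) *
          (((primesUpTo (n / k)).card : ℝ) + 1)⁻¹)
      ≤ 6.4 * Real.log (Real.log n) / Real.log n := by
  have hl9 : (0.6931471803 : ℝ) < Real.log 2 := Real.log_two_gt_d9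
  have hl9' : Real.log 2 < 0.6931471808 := Real.log_two_lt_d9
  have hlpos : (0:ℝ) < Real.log 2 := by linarith
  have hnR : (21:ℝ) ≤ n := by exact_mod_cast hn
  set A := Real.log n with hA
  have hApos : (0:ℝ) < A := Real.log_pos (by linarith)
  have hA21 : Real.log 21 ≤ A := Real.log_le_log (by norm_num) hnR
  -- L = harmonic n
  have hLharm : L = ((harmonic n : ℚ) : ℝ) := by
    rw [hL, harmonic_eq_sum_Icc]
    push_cast
    apply Finset.sum_congr rfl
    intro k _
    rw [one_div]
  have hLlb : Real.log ((n:ℝ) + 1) ≤ L := by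
    have := log_add_one_le_harmonic n
    rw [hLharm]; push_cast at this ⊢; linarith
  have hLA : A ≤ L := le_trans (Real.log_le_log (by linarith) (by linarith)) hLlb
  have hLpos : (0:ℝ) < L := lt_of_lt_of_le hApos hLA
  have hLub : L ≤ 1 + A := by
    have := harmonic_le_one_add_log n
    rw [hLharm]; push_cast at this ⊢; linarith
  -- notation
  set D : ℕ → ℝ := fun k => ((k.divisors ∩ insert 1 (primesUpTo (n / k))).card : ℝ) with hD
  set Pi : ℕ → ℝ := fun k => ((primesUpTo (n / k)).card : ℝ) with hPi
  have hPipos : ∀ k, (0:ℝ) < Pi k + 1 := fun k => by positivity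
  have hr1 : ∀ k, D k * (Pi k + 1)⁻¹ ≤ 1 := by
    intro k
    rw [← div_eq_mul_inv, div_le_one (hPipos k)]
    have := D_le_pi k (n / k)
    simp only [hD, hPi]
    exact_mod_cast this
  have hrpos : ∀ k, 0 ≤ D k * (Pi k + 1)⁻¹ := fun k => by positivity
  have hterm_nonneg : ∀ k : ℕ, (0:ℝ) ≤ 1 / (L * k) := fun k => by positivity
  -- the sum of weights equals 1 and partial sums
  have hweight : ∀ s : Finset ℕ, ∑ k ∈ s, 1 / (L * (k:ℝ)) = (1/L) * ∑ k ∈ s, 1/(k:ℝ) := by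
    intro s
    rw [Finset.mul_sum]
    apply Finset.sum_congr rfl
    intro k _
    rw [one_div, one_div, one_div, mul_inv]
  rcases le_total A 16 with hA16 | hA16
  · -- small case: bound by 1
    have hsum1 : ∑ k ∈ Finset.Icc 1 n, 1 / (L * (k:ℝ)) *
        (D k * (Pi k + 1)⁻¹) ≤ 1 := by
      calc ∑ k ∈ Finset.Icc 1 n, 1 / (L * (k:ℝ)) * (D k * (Pi k + 1)⁻¹)
          ≤ ∑ k ∈ Finset.Icc 1 n, 1 / (L * (k:ℝ)) * 1 := by
            apply Finset.sum_le_sum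
            intro k _
            exact mul_le_mul_of_nonneg_left (hr1 k) (hterm_nonneg k)
        _ = (1/L) * ∑ k ∈ Finset.Icc 1 n, 1/(k:ℝ) := by
            simp only [mul_one]; exact hweight _
        _ = 1 := by rw [← hL]; field_simp
    refine hsum1.trans ?_
    -- show 1 ≤ 6.4 log A / A  via convexity
    have hcvx : ConvexOn ℝ (Set.Ioi (0:ℝ)) (fun x => x - 6.4 * Real.log x) := by
      have h1 : ConvexOn ℝ (Set.Ioi (0:ℝ)) (fun x : ℝ => x) := convexOn_id (convex_Ioi 0)
      have h3 : ConvexOn ℝ (Set.Ioi (0:ℝ)) (fun x => -Real.log x) :=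
        strictConcaveOn_log_Ioi.concaveOn.neg
      have h4 := h3.smul (c := (6.4:ℝ)) (by norm_num)
      have h5 := h1.add h4
      convert h5 using 2 with x
      · rfl
      simp [smul_eq_mul]; ring
    have he : Real.exp 1 < 2.7182818286 := Real.exp_one_lt_d9
    have hlog21ge : (2.7724:ℝ) ≤ Real.log 21 := by
      have h16 : Real.log 16 ≤ Real.log 21 := Real.log_le_log (by norm_num) (by norm_num)
      have : Real.log 16 = 4 * Real.log 2 := by
        rw [show (16:ℝ) = 2^4 by norm_num, Real.log_pow]; push_cast; ring
      linarith
    have hfa : Real.log 21 - 6.4 * Real.log (Real.log 21) ≤ 0 := by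
      have h32 : Real.log 21 ≤ Real.log 32 := Real.log_le_log (by norm_num) (by norm_num)
      have h32' : Real.log 32 = 5 * Real.log 2 := by
        rw [show (32:ℝ) = 2^5 by norm_num, Real.log_pow]; push_cast; ring
      have hloglog : (1:ℝ) ≤ Real.log (Real.log 21) := by
        have hexp : Real.exp 1 ≤ Real.log 21 := by linarith
        have := Real.log_le_log (Real.exp_pos 1) hexp
        rwa [Real.log_exp] at this
      linarith
    have hfb : (16:ℝ) - 6.4 * Real.log 16 ≤ 0 := by
      have : Real.log 16 = 4 * Real.log 2 := by
        rw [show (16:ℝ) = 2^4 by norm_num, Real.log_pow]; push_cast; ring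
      linarith
    have hmem : A ∈ segment ℝ (Real.log 21) (16:ℝ) := by
      rw [segment_eq_Icc (by linarith : Real.log 21 ≤ (16:ℝ))]
      exact ⟨hA21, hA16⟩
    have := hcvx.le_on_segment (x := Real.log 21) (y := (16:ℝ))
      (Set.mem_Ioi.2 (by linarith)) (Set.mem_Ioi.2 (by norm_num)) hmem
    have hfA : A - 6.4 * Real.log A ≤ 0 := le_trans this (max_le hfa hfb)
    rw [le_div_iff₀ hApos]
    linarith
  · -- large case
    set B := Real.log A with hB
    have hB4 : 4 * Real.log 2 ≤ B := by
      have h16 : Real.log 16 ≤ B := Real.log_le_log (by norm_num) hA16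
      have : Real.log 16 = 4 * Real.log 2 := by
        rw [show (16:ℝ) = 2^4 by norm_num, Real.log_pow]; push_cast; ring
      linarith
    set T : ℕ := ⌊A^3⌋₊ with hT
    have hA3 : (4096:ℝ) ≤ A^3 := by
      have := pow_le_pow_left₀ (by norm_num : (0:ℝ) ≤ 16) hA16 3
      norm_num at this
      linarith
    have hT2 : 2 ≤ T := Nat.le_floor (by push_cast; nlinarith)
    have hT0 : 0 < T := by omega
    have hTle : (T:ℝ) ≤ A^3 := Nat.floor_le (by positivity)
    have hTge : A^3 - 1 ≤ (T:ℝ) := by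
      have := Nat.lt_floor_add_one (A^3)
      linarith
    have hTR2 : (2:ℝ) ≤ (T:ℝ) := by exact_mod_cast hT2
    -- n ≥ 2T
    have hexpA : Real.exp A = n := Real.exp_log (by linarith)
    have hA6 : A^6 / 720 ≤ Real.exp A := by
      have hsum := Real.sum_le_exp_of_nonneg (le_of_lt hApos) 7
      have hsingle : A^6 / (Nat.factorial 6 : ℝ) ≤
          ∑ i ∈ Finset.range 7, A^i / (Nat.factorial i : ℝ) := by
        apply Finset.single_le_sum (f := fun i => A^i / (Nat.factorial i : ℝ))
        · intro i _; positivity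
        · norm_num
      norm_num [Nat.factorial] at hsingle
      exact le_trans hsingle hsum
    have hn2T : 2 * T ≤ n := by
      have h1 : (2:ℝ) * T ≤ (n:ℝ) := by
        have h2 : 2 * A^3 ≤ A^6/720 := by nlinarith
        have := hexpA ▸ hA6
        linarith
      exact_mod_cast h1
    set K : ℕ := n / T with hK
    have hK1 : 1 ≤ K := by
      rw [hK]
      exact (Nat.one_le_div_iff hT0).2 (by omega)
    have hKn : K ≤ n := Nat.div_le_self _ _
    have hKpos : (0:ℝ) < K := by exact_mod_cast hK1
    have hn2KT : (n:ℝ) < 2 * K * T := by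
      have hdm : T * K + n % T = n := by rw [hK]; exact Nat.div_add_mod n T
      have hmod := Nat.mod_lt n hT0
      have hTK : T ≤ T * K := Nat.le_mul_of_pos_right T hK1
      have : n < 2 * (T * K) := by omega
      have := (Nat.cast_lt (α := ℝ)).2 this
      push_cast at this
      linarith
    have hlogK : A - Real.log 2 - Real.log (T:ℝ) ≤ Real.log (K:ℝ) := by
      have h1 : Real.log (n:ℝ) ≤ Real.log (2 * (K:ℝ) * (T:ℝ)) :=
        Real.log_le_log (by linarith) (le_of_lt hn2KT)
      rw [Real.log_mul (by positivity) (by positivity),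
        Real.log_mul (by norm_num) (by positivity)] at h1
      linarith
    have hlogT : Real.log (T:ℝ) ≤ 3 * B := by
      have h1 : Real.log (T:ℝ) ≤ Real.log (A^3) := Real.log_le_log (by linarith) hTle
      rw [Real.log_pow] at h1
      push_cast at h1
      linarith
    have hKT : K * T ≤ n := by rw [hK]; exact Nat.div_mul_le_self n T
    clear_value T K
    -- split the sum
    have hsplit : Finset.Icc 1 n = Finset.Icc 1 K ∪ Finset.Ioc K n := by
      ext x
      simp only [Finset.mem_Icc, Finset.mem_union, Finset.mem_Ioc]
      omega
    have hdisj : Disjoint (Finset.Icc 1 K) (Finset.Ioc K n) := by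
      rw [Finset.disjoint_left]
      intro a ha hb
      simp only [Finset.mem_Icc] at ha
      simp only [Finset.mem_Ioc] at hb
      omega
    rw [hsplit, Finset.sum_union hdisj]
    -- head bound
    set l := Real.log 2 with hldef
    have hc0 : ∀ k ∈ Finset.Icc 1 K, D k * (Pi k + 1)⁻¹ ≤
        (A / l + 1) * (Real.log ((n:ℝ)+1) / (l * ((T:ℝ) - 1))) := by
      intro k hk
      rw [Finset.mem_Icc] at hk
      have hk1 : 1 ≤ k := hk.1
      have hkK : k ≤ K := hk.2
      have hkn : k ≤ n := le_trans hkK hKn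
      -- m = n / k ≥ T
      have hmT : T ≤ n / k := by
        apply (Nat.le_div_iff_mul_le (by omega)).2
        calc T * k ≤ T * K := Nat.mul_le_mul_left T hkK
          _ = K * T := Nat.mul_comm _ _
          _ ≤ n := hKT
      have hmn : n / k ≤ n := Nat.div_le_self _ _
      have hm2 : 2 ≤ n / k := le_trans hT2 hmT
      have hcheb := cheb (n / k) hm2
      have hmTR : (T:ℝ) ≤ ((n/k : ℕ):ℝ) := by exact_mod_cast hmT
      have hmnR : ((n/k : ℕ):ℝ) ≤ (n:ℝ) := by exact_mod_cast hmn
      have hlogm : Real.log (((n/k : ℕ):ℝ) + 1) ≤ Real.log ((n:ℝ)+1) :=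
        Real.log_le_log (by positivity) (by linarith)
      have hlogm_pos : 0 < Real.log (((n/k : ℕ):ℝ) + 1) := by
        apply Real.log_pos; linarith
      have hlognn_pos : 0 < Real.log ((n:ℝ)+1) := by
        apply Real.log_pos; linarith
      -- lower bound on Pi k + 1
      have hlb : l * ((T:ℝ) - 1) / Real.log ((n:ℝ)+1) ≤ Pi k + 1 := by
        refine le_trans ?_ hcheb
        rw [div_le_div_iff₀ hlognn_pos hlogm_pos]
        have h1 : l * ((T:ℝ)-1) ≤ l * (((n/k:ℕ):ℝ) - 1) := by
          apply mul_le_mul_of_nonneg_left _ (le_of_lt hlpos)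
          linarith
        nlinarith [mul_le_mul_of_nonneg_left hlogm (mul_nonneg (le_of_lt hlpos) (by linarith : (0:ℝ) ≤ (T:ℝ)-1))]
      have hlbpos : 0 < l * ((T:ℝ) - 1) / Real.log ((n:ℝ)+1) := by
        apply div_pos (mul_pos hlpos (by linarith)) hlognn_pos
      have hinv : (Pi k + 1)⁻¹ ≤ Real.log ((n:ℝ)+1) / (l * ((T:ℝ) - 1)) := by
        rw [show Real.log ((n:ℝ)+1) / (l * ((T:ℝ) - 1))
            = (l * ((T:ℝ) - 1) / Real.log ((n:ℝ)+1))⁻¹ by rw [inv_div]]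
        exact inv_anti₀ hlbpos hlb
      have hDk : D k ≤ A / l + 1 := by
        have h1 := D_le_omega k (n / k) (by omega)
        have h2 := omega_log k hk1
        have h3 : Real.log (k:ℝ) ≤ A := Real.log_le_log (by positivity) (by exact_mod_cast hkn)
        have h4 : (k.primeFactors.card : ℝ) ≤ A / l := by
          rw [le_div_iff₀ hlpos]; linarith
        calc D k ≤ (k.primeFactors.card : ℝ) + 1 := by
              simp only [hD]; exact_mod_cast h1
          _ ≤ A / l + 1 := by linarith
      apply mul_le_mul hDk hinv (by positivity) (by positivity)
    have hhead : ∑ k ∈ Finset.Icc 1 K, 1 / (L * (k:ℝ)) * (D k * (Pi k + 1)⁻¹)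
        ≤ (A / l + 1) * (Real.log ((n:ℝ)+1) / (l * ((T:ℝ) - 1))) := by
      set c := (A / l + 1) * (Real.log ((n:ℝ)+1) / (l * ((T:ℝ) - 1))) with hc
      have hcnn : 0 ≤ c := by
        apply mul_nonneg (by positivity)
        apply div_nonneg (Real.log_nonneg (by linarith)) (by nlinarith)
      calc ∑ k ∈ Finset.Icc 1 K, 1 / (L * (k:ℝ)) * (D k * (Pi k + 1)⁻¹)
          ≤ ∑ k ∈ Finset.Icc 1 K, 1 / (L * (k:ℝ)) * c := by
            apply Finset.sum_le_sum
            intro k hk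
            exact mul_le_mul_of_nonneg_left (hc0 k hk) (hterm_nonneg k)
        _ = (∑ k ∈ Finset.Icc 1 K, 1 / (L * (k:ℝ))) * c := by rw [Finset.sum_mul]
        _ ≤ 1 * c := by
            apply mul_le_mul_of_nonneg_right _ hcnn
            rw [hweight]
            have h1 : ∑ k ∈ Finset.Icc 1 K, 1/(k:ℝ) ≤ L := by
              rw [hL]
              apply Finset.sum_le_sum_of_subset_of_nonneg
              · exact Finset.Icc_subset_Icc_right hKn
              · intro i _ _; positivity
            calc (1/L) * ∑ k ∈ Finset.Icc 1 K, 1/(k:ℝ) ≤ (1/L) * L := by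
                  apply mul_le_mul_of_nonneg_left h1 (by positivity)
              _ = 1 := by field_simp
        _ = c := one_mul c
    -- tail bound
    have hHK : ((harmonic K : ℚ) : ℝ) = ∑ k ∈ Finset.Icc 1 K, 1/(k:ℝ) := by
      rw [harmonic_eq_sum_Icc]
      push_cast
      apply Finset.sum_congr rfl
      intro k _
      rw [one_div]
    have htail : ∑ k ∈ Finset.Ioc K n, 1 / (L * (k:ℝ)) * (D k * (Pi k + 1)⁻¹)
        ≤ (1 + l + 3*B) / A := by
      have h1 : ∑ k ∈ Finset.Ioc K n, 1 / (L * (k:ℝ)) * (D k * (Pi k + 1)⁻¹)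
          ≤ (1/L) * ∑ k ∈ Finset.Ioc K n, 1/(k:ℝ) := by
        rw [← hweight]
        apply Finset.sum_le_sum
        intro k _
        calc 1 / (L * (k:ℝ)) * (D k * (Pi k + 1)⁻¹) ≤ 1 / (L * (k:ℝ)) * 1 :=
              mul_le_mul_of_nonneg_left (hr1 k) (hterm_nonneg k)
          _ = 1 / (L * (k:ℝ)) := mul_one _
      have h2 : ∑ k ∈ Finset.Ioc K n, 1/(k:ℝ) = L - ∑ k ∈ Finset.Icc 1 K, 1/(k:ℝ) := by
        rw [hL, hsplit, Finset.sum_union hdisj]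
        ring
      have h3 : Real.log ((K:ℝ)+1) ≤ ∑ k ∈ Finset.Icc 1 K, 1/(k:ℝ) := by
        have := log_add_one_le_harmonic K
        rw [hHK] at this
        push_cast at this ⊢
        linarith
      have h4 : Real.log (K:ℝ) ≤ Real.log ((K:ℝ)+1) :=
        Real.log_le_log hKpos (by linarith)
      have h5 : ∑ k ∈ Finset.Ioc K n, 1/(k:ℝ) ≤ 1 + l + 3*B := by
        rw [h2]
        have : A - l - 3*B ≤ Real.log (K:ℝ) := by linarith
        linarith
      have h6 : (0:ℝ) ≤ 1 + l + 3*B := by nlinarith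
      calc ∑ k ∈ Finset.Ioc K n, 1 / (L * (k:ℝ)) * (D k * (Pi k + 1)⁻¹)
          ≤ (1/L) * ∑ k ∈ Finset.Ioc K n, 1/(k:ℝ) := h1
        _ ≤ (1/L) * (1 + l + 3*B) := by
            apply mul_le_mul_of_nonneg_left h5 (by positivity)
        _ ≤ (1/A) * (1 + l + 3*B) := by
            apply mul_le_mul_of_nonneg_right _ h6
            rw [one_div, one_div]
            exact inv_anti₀ hApos hLA
        _ = (1 + l + 3*B) / A := by ring
    -- combine
    have hlogn1 : Real.log ((n:ℝ)+1) ≤ A + l := by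
      have h1 : Real.log ((n:ℝ)+1) ≤ Real.log (2*(n:ℝ)) :=
        Real.log_le_log (by linarith) (by linarith)
      rw [Real.log_mul (by norm_num) (by linarith)] at h1
      linarith
    have hheadnum : (A / l + 1) * (Real.log ((n:ℝ)+1) / (l * ((T:ℝ) - 1))) ≤ 2.5 / A :=
      numeric_head A l (T:ℝ) hA16 hl9 hl9' hTge (Real.log ((n:ℝ)+1))
        (Real.log_nonneg (by linarith)) hlogn1
    have hfinal : 2.5 / A + (1 + l + 3*B) / A ≤ 6.4 * B / A :=
      numeric_final A l B hApos hl9 hB4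
    calc (∑ k ∈ Finset.Icc 1 K, 1 / (L * (k:ℝ)) * (D k * (Pi k + 1)⁻¹))
          + ∑ k ∈ Finset.Ioc K n, 1 / (L * (k:ℝ)) * (D k * (Pi k + 1)⁻¹)
        ≤ (A / l + 1) * (Real.log ((n:ℝ)+1) / (l * ((T:ℝ) - 1))) + (1 + l + 3*B) / A :=
          add_le_add hhead htail
      _ ≤ 2.5 / A + (1 + l + 3*B) / A := by
          exact add_le_add hheadnum le_rfl
      _ ≤ 6.4 * B / A := hfinal

/-- **Lemma 3.2: the probability that `Q(⌊n/H_n⌋)` divides `H_n` is small**. -/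
theorem prob_Q_divides_Hn
    {Ω : Type*} [MeasureSpace Ω] [IsProbabilityMeasure (ℙ : Measure Ω)]
    (n : ℕ) (hn : 21 ≤ n)
    (L : ℝ) (hL : L = ∑ j ∈ Finset.Icc 1 n, (1 : ℝ) / j)
    -- `H` has harmonic distribution on `{1, …, n}`
    (H : Ω → ℕ) (hHmeas : Measurable H)
    (hH : ∀ k : ℕ, ℙ {ω | H ω = k}
      = if k ∈ Finset.Icc 1 n then ENNReal.ofReal (1 / (L * k)) else 0)
    -- `Q k` is uniform on `{1} ∪ {p prime : p ≤ k}`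
    (Q : ℕ → Ω → ℕ) (hQmeas : ∀ k, Measurable (Q k))
    (hQ : ∀ k : ℕ, 1 ≤ k → ∀ j : ℕ, ℙ {ω | Q k ω = j}
      = if j ∈ insert 1 (primesUpTo k) then (((primesUpTo k).card : ℝ≥0∞) + 1)⁻¹ else 0)
    -- the family `{Q k}` is independent of `H`
    (hindep : IndepFun (fun ω => fun k => Q k ω) H ℙ) :
    (ℙ {ω | Q (n / H ω) ω ∣ H ω}).toReal ≤ 6.4 * Real.log (Real.log n) / Real.log n := by
  have hLnn : 0 ≤ L := by
    rw [hL]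
    apply Finset.sum_nonneg
    intro j _
    positivity
  rw [prob_eq n hn L H hHmeas hH Q hQmeas hQ hindep]
  have htne : ∀ k ∈ Finset.Icc 1 n,
      ENNReal.ofReal (1 / (L * k)) *
        (((k.divisors ∩ insert 1 (primesUpTo (n / k))).card : ℝ≥0∞) *
          (((primesUpTo (n / k)).card : ℝ≥0∞) + 1)⁻¹) ≠ ⊤ := by
    intro k _
    apply ENNReal.mul_ne_top ENNReal.ofReal_ne_top
    apply ENNReal.mul_ne_top (ENNReal.natCast_ne_top _)
    apply ENNReal.inv_ne_top.2
    simp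
  rw [ENNReal.toReal_sum htne]
  refine le_trans (le_of_eq (Finset.sum_congr rfl ?_)) (real_est n hn L hL)
  intro k _
  rw [ENNReal.toReal_mul, ENNReal.toReal_mul, ENNReal.toReal_ofReal (by positivity),
    ENNReal.toReal_inv, ENNReal.toReal_add (ENNReal.natCast_ne_top _) ENNReal.one_ne_top]
  simp [ENNReal.toReal_natCast]
end

section
/- Let n ≥ 21 and let ω(k) denote the number of distinct prime divisors of k. Let J_n be uniformly distributed on {1, …, n}. Then |E[ω(J_n)] − log log n| ≤ 1.5. -/
open MeasureTheory ProbabilityTheory Finset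
open scoped ProbabilityTheory ENNReal

lemma primeFactors_eq_filter {m k : ℕ} (hk : k ∈ Finset.Icc 1 m) :
    k.primeFactors = (m + 1).primesBelow.filter (· ∣ k) := by
  rw [Finset.mem_Icc] at hk
  ext p
  simp only [Nat.mem_primeFactors, Finset.mem_filter, Nat.mem_primesBelow]
  constructor
  · rintro ⟨hp, hpk, -⟩
    exact ⟨⟨Nat.lt_succ_of_le ((Nat.le_of_dvd (by omega) hpk).trans hk.2), hp⟩, hpk⟩
  · rintro ⟨⟨-, hp⟩, hpk⟩
    exact ⟨hp, hpk, by omega⟩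

lemma swap_sum (m : ℕ) (f : ℕ → ℝ) :
    ∑ k ∈ Finset.Icc 1 m, ∑ p ∈ k.primeFactors, f p
      = ∑ p ∈ (m + 1).primesBelow, ((m / p : ℕ) : ℝ) * f p := by
  have h1 : ∀ k ∈ Finset.Icc 1 m, ∑ p ∈ k.primeFactors, f p
      = ∑ p ∈ (m + 1).primesBelow, if p ∣ k then f p else 0 := by
    intro k hk
    rw [primeFactors_eq_filter hk, Finset.sum_filter]
  rw [Finset.sum_congr rfl h1, Finset.sum_comm]
  refine Finset.sum_congr rfl fun p _ => ?_
  rw [← Finset.sum_filter]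
  have : Finset.Icc 1 m = Finset.Ioc 0 m := rfl
  rw [this]
  rw [Finset.sum_const, ← Nat.Ioc_filter_dvd_card_eq_div m p]
  simp [mul_comm]

lemma theta_bound (m : ℕ) :
    ∑ p ∈ (m + 1).primesBelow, Real.log p ≤ 2 * m * Real.log 2 := by
  have h1 : ∑ p ∈ (m + 1).primesBelow, Real.log p
      = Real.log (∏ p ∈ (m + 1).primesBelow, (p : ℝ)) := by
    rw [Real.log_prod]
    intro p hp
    exact_mod_cast (Nat.prime_of_mem_primesBelow hp).pos.ne'
  have h2 : (∏ p ∈ (m + 1).primesBelow, (p : ℝ)) = ((primorial m : ℕ) : ℝ) := by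
    rw [primorial]; push_cast; rfl
  rw [h1, h2]
  calc Real.log (primorial m) ≤ Real.log ((4 : ℝ) ^ m) := by
        refine Real.log_le_log (by exact_mod_cast primorial_pos m) ?_
        exact_mod_cast primorial_le_4_pow m
    _ = 2 * m * Real.log 2 := by
        rw [show (4 : ℝ) = 2 ^ 2 by norm_num, ← pow_mul, Real.log_pow]
        push_cast; ring

lemma sum_log_primeFactors_le {k : ℕ} (hk : 1 ≤ k) :
    ∑ p ∈ k.primeFactors, Real.log p ≤ Real.log k := by
  have hd := Nat.prod_primeFactors_dvd k
  have hpos : 0 < ∏ p ∈ k.primeFactors, p :=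
    Nat.pos_of_ne_zero fun h0 => by
      rw [h0] at hd; exact absurd (Nat.eq_zero_of_zero_dvd hd) (by omega)
  have h1 : ∑ p ∈ k.primeFactors, Real.log p
      = Real.log (∏ p ∈ k.primeFactors, (p : ℝ)) := by
    rw [Real.log_prod]
    intro p hp
    exact_mod_cast (Nat.prime_of_mem_primeFactors hp).pos.ne'
  have h2 : (∏ p ∈ k.primeFactors, (p : ℝ)) = ((∏ p ∈ k.primeFactors, p : ℕ) : ℝ) := by
    push_cast; rfl
  rw [h1, h2]
  refine Real.log_le_log (by exact_mod_cast hpos) ?_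
  exact_mod_cast Nat.le_of_dvd (by omega) hd

noncomputable def aM (m : ℕ) : ℝ := ∑ p ∈ (m + 1).primesBelow, Real.log p / p
noncomputable def tP (m : ℕ) : ℝ := ∑ p ∈ (m + 1).primesBelow, (p : ℝ)⁻¹

lemma cheb_bound {m : ℕ} (hm : 1 ≤ m) :
    ∑ p ∈ (m + 1).primesBelow, ((m / p : ℕ) : ℝ) * Real.log p ≤ m * Real.log m := by
  rw [← swap_sum m (fun p => Real.log p)]
  calc ∑ k ∈ Finset.Icc 1 m, ∑ p ∈ k.primeFactors, Real.log p
      ≤ ∑ k ∈ Finset.Icc 1 m, Real.log m := by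
        refine Finset.sum_le_sum fun k hk => ?_
        rw [Finset.mem_Icc] at hk
        exact (sum_log_primeFactors_le hk.1).trans
          (Real.log_le_log (by exact_mod_cast hk.1) (by exact_mod_cast hk.2))
    _ = m * Real.log m := by
        rw [Finset.sum_const, Nat.card_Icc]
        simp [nsmul_eq_mul]

lemma mertens_first {m : ℕ} (hm : 1 ≤ m) :
    aM m ≤ Real.log m + 2 * Real.log 2 := by
  have hm0 : (0 : ℝ) < m := by exact_mod_cast hm
  have key : (m : ℝ) * aM m ≤ m * (Real.log m + 2 * Real.log 2) := by
    rw [aM, Finset.mul_sum]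
    have step : ∀ p ∈ (m + 1).primesBelow,
        (m : ℝ) * (Real.log p / p) ≤ ((m / p : ℕ) : ℝ) * Real.log p + Real.log p := by
      intro p hp
      have hp2 := (Nat.prime_of_mem_primesBelow hp).two_le
      have hppos : (0 : ℝ) < p := by exact_mod_cast (by omega : 0 < p)
      have hlog : 0 ≤ Real.log p := Real.log_nonneg (by exact_mod_cast (by omega : 1 ≤ p))
      have hdiv : (m : ℝ) / p ≤ ((m / p : ℕ) : ℝ) + 1 := by
        rw [div_le_iff₀ hppos]
        have h1 : m < p * (m / p) + p := by
          have h2 := Nat.div_add_mod m p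
          have h3 : m % p < p := Nat.mod_lt m (by omega)
          omega
        have : (m : ℝ) < p * ((m / p : ℕ) : ℝ) + p := by exact_mod_cast h1
        nlinarith
      calc (m : ℝ) * (Real.log p / p) = ((m : ℝ) / p) * Real.log p := by ring
        _ ≤ (((m / p : ℕ) : ℝ) + 1) * Real.log p := by
            exact mul_le_mul_of_nonneg_right hdiv hlog
        _ = ((m / p : ℕ) : ℝ) * Real.log p + Real.log p := by ring
    calc ∑ p ∈ (m + 1).primesBelow, (m : ℝ) * (Real.log p / p)
        ≤ ∑ p ∈ (m + 1).primesBelow, (((m / p : ℕ) : ℝ) * Real.log p + Real.log p) :=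
          Finset.sum_le_sum step
      _ = (∑ p ∈ (m + 1).primesBelow, ((m / p : ℕ) : ℝ) * Real.log p)
          + ∑ p ∈ (m + 1).primesBelow, Real.log p := Finset.sum_add_distrib
      _ ≤ m * Real.log m + 2 * m * Real.log 2 := add_le_add (cheb_bound hm) (theta_bound m)
      _ = m * (Real.log m + 2 * Real.log 2) := by ring
  exact le_of_mul_le_mul_left key hm0


lemma log17_big : Real.exp 1 ≤ Real.log 17 := by
  have h1 : (4 : ℝ) * Real.log 2 ≤ Real.log 17 := by
    have : Real.log ((2:ℝ) ^ 4) ≤ Real.log 17 :=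
      Real.log_le_log (by norm_num) (by norm_num)
    rwa [Real.log_pow] at this
  have h2 := Real.log_two_gt_d9
  have h3 := Real.exp_one_lt_d9
  nlinarith

lemma one_lt_log17 : 1 < Real.log 17 := by
  have := Real.exp_one_gt_d9
  have := log17_big
  linarith

lemma log_n_ge {n : ℕ} (hn : 17 ≤ n) : Real.log 17 ≤ Real.log n :=
  Real.log_le_log (by norm_num) (by exact_mod_cast hn)

lemma tP_succ (n : ℕ) :
    tP (n + 1) = tP n + (if (n + 1).Prime then ((n + 1 : ℕ) : ℝ)⁻¹ else 0) := by
  rw [tP, tP, Nat.primesBelow_succ]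
  by_cases h : (n + 1).Prime
  · rw [if_pos h, if_pos h, Finset.sum_insert (fun hmem => (Nat.lt_of_mem_primesBelow hmem).false)]
    push_cast; ring
  · rw [if_neg h, if_neg h, add_zero]

lemma aM_succ (n : ℕ) :
    aM (n + 1) = aM n
      + (if (n + 1).Prime then Real.log ((n + 1 : ℕ) : ℝ) / ((n + 1 : ℕ) : ℝ) else 0) := by
  rw [aM, aM, Nat.primesBelow_succ]
  by_cases h : (n + 1).Prime
  · rw [if_pos h, if_pos h, Finset.sum_insert (fun hmem => (Nat.lt_of_mem_primesBelow hmem).false)]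
    push_cast; ring
  · rw [if_neg h, if_neg h, add_zero]

lemma abel_real {A x y : ℝ} (hx : 0 < x) (hxy : x ≤ y) (hA : A ≤ x) :
    A / x + Real.log x ≤ A / y + Real.log y := by
  have hy : 0 < y := lt_of_lt_of_le hx hxy
  have h1 : Real.log (x / y) ≤ x / y - 1 := Real.log_le_sub_one_of_pos (by positivity)
  rw [Real.log_div hx.ne' hy.ne'] at h1
  have h3 : 1 / y ≤ 1 / x := one_div_le_one_div_of_le hx hxy
  have h4 : A * (1 / x - 1 / y) ≤ x * (1 / x - 1 / y) :=
    mul_le_mul_of_nonneg_right hA (by linarith)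
  have h5 : x * (1 / x - 1 / y) = 1 - x / y := by field_simp
  have h6 : A / x - A / y = A * (1 / x - 1 / y) := by field_simp
  linarith

lemma tP_le {n : ℕ} (hn : 17 ≤ n) :
    tP n ≤ tP 16 + (aM n - 2 * Real.log 2) / Real.log n
      - (aM 16 - 2 * Real.log 2) / Real.log 17
      + (Real.log (Real.log n) - Real.log (Real.log 17)) := by
  induction n, hn using Nat.le_induction with
  | base =>
    have h17 : Nat.Prime 17 := by norm_num
    have hL : Real.log 17 ≠ 0 := by have := one_lt_log17; linarith
    have e1 : tP 17 = tP 16 + (17 : ℝ)⁻¹ := by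
      have := tP_succ 16
      simpa [h17] using this
    have e2 : aM 17 = aM 16 + Real.log 17 / 17 := by
      have := aM_succ 16
      simpa [h17] using this
    rw [e1, e2]
    have : (aM 16 + Real.log 17 / 17 - 2 * Real.log 2) / Real.log 17
        - (aM 16 - 2 * Real.log 2) / Real.log 17 = (17 : ℝ)⁻¹ := by
      field_simp
      ring
    push_cast
    linarith [this]
  | succ n hn ih =>
    have hn1 : (1 : ℕ) ≤ n := by omega
    have hL17 : 1 < Real.log 17 := one_lt_log17
    have hLge : Real.log 17 ≤ Real.log n := log_n_ge hn
    have hpos : 0 < Real.log n := by linarith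
    have hmono : Real.log n ≤ Real.log (n + 1 : ℕ) := by
      refine Real.log_le_log (by exact_mod_cast (by omega : 0 < n)) ?_
      exact_mod_cast Nat.le_succ n
    have hpos1 : 0 < Real.log (n + 1 : ℕ) := lt_of_lt_of_le hpos hmono
    have hstep : (aM n - 2 * Real.log 2) / Real.log n + Real.log (Real.log n)
        ≤ (aM n - 2 * Real.log 2) / Real.log (n + 1 : ℕ)
          + Real.log (Real.log (n + 1 : ℕ)) := by
      refine abel_real hpos hmono ?_
      have := mertens_first hn1
      linarith
    have e2 : (aM (n + 1) - 2 * Real.log 2) / Real.log (n + 1 : ℕ)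
        = (aM n - 2 * Real.log 2) / Real.log (n + 1 : ℕ)
          + (if (n + 1).Prime then ((n + 1 : ℕ) : ℝ)⁻¹ else 0) := by
      rw [aM_succ n]
      by_cases h : (n + 1).Prime
      · rw [if_pos h, if_pos h]
        have hne : ((n + 1 : ℕ) : ℝ) ≠ 0 := by positivity
        rw [show aM n + Real.log ((n + 1 : ℕ) : ℝ) / ((n + 1 : ℕ) : ℝ) - 2 * Real.log 2
            = (aM n - 2 * Real.log 2) + Real.log ((n + 1 : ℕ) : ℝ) / ((n + 1 : ℕ) : ℝ) by ring,
          add_div, div_right_comm, div_self hpos1.ne', one_div]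
      · rw [if_neg h, if_neg h, add_zero, add_zero]
    have e1 := tP_succ n
    have key : tP (n + 1) ≤ tP 16
        + (aM (n + 1) - 2 * Real.log 2) / Real.log (n + 1 : ℕ)
        - (aM 16 - 2 * Real.log 2) / Real.log 17
        + (Real.log (Real.log (n + 1 : ℕ)) - Real.log (Real.log 17)) := by
      rw [e1, e2]
      linarith
    convert key using 4 <;> push_cast <;> ring


lemma primesBelow_17 : (17 : ℕ).primesBelow = {2, 3, 5, 7, 11, 13} := by decide

lemma tP_16 : tP 16 = 40361 / 30030 := by
  rw [tP, primesBelow_17]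
  norm_num

lemma aM_16_ge : 2 * Real.log 2 ≤ aM 16 := by
  rw [aM, primesBelow_17]
  have hpow : ∀ a : ℕ, ∀ x : ℝ, (2:ℝ)^a ≤ x → (a : ℝ) * Real.log 2 ≤ Real.log x := by
    intro a x h
    have := Real.log_le_log (by positivity) h
    rwa [Real.log_pow] at this
  have l3 : (1:ℝ) * Real.log 2 ≤ Real.log 3 := by exact_mod_cast hpow 1 3 (by norm_num)
  have l5 : (2:ℝ) * Real.log 2 ≤ Real.log 5 := by exact_mod_cast hpow 2 5 (by norm_num)
  have l7 : (2:ℝ) * Real.log 2 ≤ Real.log 7 := by exact_mod_cast hpow 2 7 (by norm_num)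
  have l11 : (3:ℝ) * Real.log 2 ≤ Real.log 11 := by exact_mod_cast hpow 3 11 (by norm_num)
  have l13 : (3:ℝ) * Real.log 2 ≤ Real.log 13 := by exact_mod_cast hpow 3 13 (by norm_num)
  have l2 : 0 < Real.log 2 := Real.log_pos (by norm_num)
  norm_num
  nlinarith

lemma tP_final {n : ℕ} (hn : 17 ≤ n) : tP n ≤ Real.log (Real.log n) + 1.35 := by
  have h1 := tP_le hn
  have hLn : 0 < Real.log n := lt_of_lt_of_le (by linarith [one_lt_log17]) (log_n_ge hn)
  have h2 : (aM n - 2 * Real.log 2) / Real.log n ≤ 1 := by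
    rw [div_le_one hLn]
    have := mertens_first (by omega : 1 ≤ n)
    linarith
  have h3 : 0 ≤ (aM 16 - 2 * Real.log 2) / Real.log 17 := by
    apply div_nonneg (by linarith [aM_16_ge]) (by linarith [one_lt_log17])
  have h4 : 1 ≤ Real.log (Real.log 17) := by
    exact (Real.le_log_iff_exp_le (by linarith [one_lt_log17])).mpr log17_big
  have h5 := tP_16
  linarith


noncomputable def invMul : ℕ →* ℝ where
  toFun k := (k : ℝ)⁻¹
  map_one' := by norm_num
  map_mul' m k := by push_cast; exact mul_inv _ _

lemma harmonic_le_prod (n : ℕ) :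
    ∑ k ∈ Finset.Icc 1 n, (k : ℝ)⁻¹
      ≤ ∏ p ∈ (n + 1).primesBelow, (1 - (p : ℝ)⁻¹)⁻¹ := by
  classical
  have h : ∀ {p : ℕ}, p.Prime → ‖invMul p‖ < 1 := by
    intro p hp
    have : (2 : ℝ) ≤ p := by exact_mod_cast hp.two_le
    rw [show invMul p = (p : ℝ)⁻¹ from rfl, Real.norm_eq_abs, abs_of_nonneg (by positivity)]
    rw [inv_lt_one_iff₀]
    right; linarith
  have hs := (EulerProduct.summable_and_hasSum_smoothNumbers_prod_primesBelow_geometric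
    h (n + 1)).2
  have hsum := sum_le_hasSum
    ((Finset.Icc 1 n).subtype (· ∈ (n + 1).smoothNumbers))
    (fun i _ => by show (0:ℝ) ≤ ((i:ℕ):ℝ)⁻¹; positivity) hs
  refine le_trans (le_of_eq ?_) hsum
  rw [Finset.sum_subtype_eq_sum_filter]
  rw [Finset.filter_true_of_mem (fun k hk => by
    rw [Finset.mem_Icc] at hk
    exact Nat.mem_smoothNumbers_of_lt (by omega) (by omega))]
  rfl


lemma telescope {n : ℕ} (hn : 4 ≤ n) :
    ∑ m ∈ Finset.Icc 5 n, ((m : ℝ) * ((m : ℝ) - 1))⁻¹ ≤ 1 / 4 - 1 / n := by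
  induction n, hn using Nat.le_induction with
  | base =>
    rw [Finset.Icc_eq_empty (by omega)]
    norm_num
  | succ n hn ih =>
    rw [Finset.sum_Icc_succ_top (by omega)]
    have h1 : (1 : ℝ) ≤ (n : ℝ) := by exact_mod_cast (by omega : 1 ≤ n)
    have hc : ((n + 1 : ℕ) : ℝ) = (n : ℝ) + 1 := by push_cast; ring
    rw [hc]
    have h2 : (((n : ℝ) + 1) * ((n : ℝ) + 1 - 1))⁻¹ = 1 / n - 1 / ((n : ℝ) + 1) := by
      rw [div_sub_div _ _ (by linarith) (by linarith)]
      field_simp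
      ring
      exact mul_inv_cancel₀ (by linarith)
    rw [h2]
    linarith

lemma sum_pp1 {n : ℕ} (hn : 4 ≤ n) :
    ∑ p ∈ (n + 1).primesBelow, ((p : ℝ) * ((p : ℝ) - 1))⁻¹ ≤ 11 / 12 := by
  have hsub : (n + 1).primesBelow ⊆ insert 2 (insert 3 (Finset.Icc 5 n)) := by
    intro p hp
    have hlt := Nat.lt_of_mem_primesBelow hp
    have hprime := Nat.prime_of_mem_primesBelow hp
    have h2 := hprime.two_le
    simp only [Finset.mem_insert, Finset.mem_Icc]
    by_cases e2 : p = 2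
    · left; exact e2
    by_cases e3 : p = 3
    · right; left; exact e3
    have e4 : p ≠ 4 := fun h => by rw [h] at hprime; norm_num at hprime
    right; right; omega
  have hnonneg : ∀ p ∈ insert 2 (insert 3 (Finset.Icc 5 n)),
      p ∉ (n + 1).primesBelow → 0 ≤ ((p : ℝ) * ((p : ℝ) - 1))⁻¹ := by
    intro p hp _
    simp only [Finset.mem_insert, Finset.mem_Icc] at hp
    have h1 : (1 : ℝ) ≤ (p : ℝ) := by exact_mod_cast (by omega : 1 ≤ p)
    exact inv_nonneg.mpr (mul_nonneg (by linarith) (by linarith))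
  refine le_trans (Finset.sum_le_sum_of_subset_of_nonneg hsub hnonneg) ?_
  rw [Finset.sum_insert (by simp), Finset.sum_insert (by simp)]
  have ht := telescope hn
  have hn' : (0:ℝ) < n := by positivity
  have h0 : 0 ≤ 1 / (n:ℝ) := by positivity
  have v2 : (((2:ℕ):ℝ) * (((2:ℕ):ℝ) - 1))⁻¹ = 1/2 := by norm_num
  have v3 : (((3:ℕ):ℝ) * (((3:ℕ):ℝ) - 1))⁻¹ = 1/6 := by norm_num
  rw [v2, v3]
  linarith


lemma log_prod_le {n : ℕ} (hn : 4 ≤ n) :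
    Real.log (∏ p ∈ (n + 1).primesBelow, (1 - (p : ℝ)⁻¹)⁻¹) ≤ tP n + 11 / 12 := by
  have hfac : ∀ p ∈ (n + 1).primesBelow, (2:ℝ) ≤ (p:ℝ) := fun p hp => by
    exact_mod_cast (Nat.prime_of_mem_primesBelow hp).two_le
  have hpos : ∀ p ∈ (n + 1).primesBelow, (0:ℝ) < 1 - (p : ℝ)⁻¹ := by
    intro p hp
    have h2 := hfac p hp
    have : (p:ℝ)⁻¹ < 1 := by rw [inv_lt_one_iff₀]; right; linarith
    linarith
  rw [Real.log_prod (fun p hp => inv_ne_zero (hpos p hp).ne')]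
  have hterm : ∀ p ∈ (n + 1).primesBelow,
      Real.log ((1 - (p : ℝ)⁻¹)⁻¹) ≤ (p:ℝ)⁻¹ + ((p : ℝ) * ((p : ℝ) - 1))⁻¹ := by
    intro p hp
    have h2 := hfac p hp
    have h0 := hpos p hp
    have hlog : Real.log ((1 - (p : ℝ)⁻¹)⁻¹) ≤ (1 - (p : ℝ)⁻¹)⁻¹ - 1 :=
      Real.log_le_sub_one_of_pos (by positivity)
    have he : (1 - (p : ℝ)⁻¹)⁻¹ - 1 = (p:ℝ)⁻¹ + ((p : ℝ) * ((p : ℝ) - 1))⁻¹ := by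
      have hp0 : (p:ℝ) ≠ 0 := by linarith
      have hp1 : (p:ℝ) - 1 ≠ 0 := by intro h; nlinarith [h]
      field_simp
      ring
    linarith
  calc ∑ p ∈ (n + 1).primesBelow, Real.log ((1 - (p : ℝ)⁻¹)⁻¹)
      ≤ ∑ p ∈ (n + 1).primesBelow, ((p:ℝ)⁻¹ + ((p : ℝ) * ((p : ℝ) - 1))⁻¹) :=
        Finset.sum_le_sum hterm
    _ = tP n + ∑ p ∈ (n + 1).primesBelow, ((p : ℝ) * ((p : ℝ) - 1))⁻¹ := by
        rw [tP, Finset.sum_add_distrib]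
    _ ≤ tP n + 11 / 12 := by linarith [sum_pp1 hn]

lemma tP_lower {n : ℕ} (hn : 21 ≤ n) : Real.log (Real.log n) ≤ tP n + 11 / 12 := by
  have hn1 : (1:ℝ) < (n:ℝ) := by exact_mod_cast (by omega : 1 < n)
  have hlogpos : 0 < Real.log n := Real.log_pos hn1
  have hH : Real.log ((n:ℝ) + 1) ≤ ∑ k ∈ Finset.Icc 1 n, (k : ℝ)⁻¹ := by
    have h1 := log_add_one_le_harmonic n
    have h2 : ((harmonic n : ℚ) : ℝ) = ∑ k ∈ Finset.Icc 1 n, (k : ℝ)⁻¹ := by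
      rw [harmonic_eq_sum_Icc]
      push_cast
      rfl
    rw [h2] at h1
    exact_mod_cast h1
  have hmono : Real.log (n:ℝ) ≤ Real.log ((n:ℝ) + 1) :=
    Real.log_le_log (by linarith) (by linarith)
  have hchain : Real.log (n:ℝ) ≤ ∏ p ∈ (n + 1).primesBelow, (1 - (p : ℝ)⁻¹)⁻¹ :=
    le_trans (le_trans hmono hH) (harmonic_le_prod n)
  calc Real.log (Real.log n) ≤ Real.log (∏ p ∈ (n + 1).primesBelow, (1 - (p : ℝ)⁻¹)⁻¹) :=
        Real.log_le_log hlogpos hchain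
    _ ≤ tP n + 11 / 12 := log_prod_le (by omega)

lemma pi_bound {n : ℕ} (hn : 1 ≤ n) :
    (((n + 1).primesBelow.card : ℕ) : ℝ) ≤ ((n:ℝ) + 1) / 2 := by
  classical
  set Sodd := (Finset.Ioc 0 n).filter (fun x => ¬ 2 ∣ x) with hSodd
  have hcards := Finset.card_filter_add_card_filter_not
    (s := Finset.Ioc 0 n) (p := fun x => 2 ∣ x)
  have hdvd : ((Finset.Ioc 0 n).filter (fun x => 2 ∣ x)).card = n / 2 :=
    Nat.Ioc_filter_dvd_card_eq_div n 2
  have hIoc : (Finset.Ioc 0 n).card = n := by rw [Nat.card_Ioc]; omega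
  have hSoddcard : Sodd.card = n - n / 2 := by rw [hSodd]; omega
  have h1mem : 1 ∈ Sodd := by
    rw [hSodd, Finset.mem_filter, Finset.mem_Ioc]
    exact ⟨⟨by omega, hn⟩, by decide⟩
  have hsub : (n + 1).primesBelow ⊆ insert 2 (Sodd.erase 1) := by
    intro p hp
    have hprime := Nat.prime_of_mem_primesBelow hp
    have hlt := Nat.lt_of_mem_primesBelow hp
    rw [Finset.mem_insert]
    by_cases e2 : p = 2
    · left; exact e2
    right
    rw [Finset.mem_erase]
    refine ⟨hprime.one_lt.ne', ?_⟩
    rw [hSodd, Finset.mem_filter, Finset.mem_Ioc]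
    refine ⟨⟨hprime.pos, by omega⟩, fun hdvd2 => ?_⟩
    exact e2 ((Nat.prime_dvd_prime_iff_eq Nat.prime_two hprime).mp hdvd2).symm
  have hcard : (n + 1).primesBelow.card ≤ n - n / 2 := by
    calc (n + 1).primesBelow.card ≤ (insert 2 (Sodd.erase 1)).card :=
          Finset.card_le_card hsub
      _ ≤ (Sodd.erase 1).card + 1 := Finset.card_insert_le _ _
      _ = (Sodd.card - 1) + 1 := by rw [Finset.card_erase_of_mem h1mem]
      _ = n - n / 2 := by
          have : 1 ≤ Sodd.card := Finset.card_pos.mpr ⟨1, h1mem⟩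
          omega
  have hnat : 2 * (n - n / 2) ≤ n + 1 := by omega
  have : ((n + 1).primesBelow.card : ℝ) ≤ ((n - n / 2 : ℕ) : ℝ) := by exact_mod_cast hcard
  have h2 : ((n - n / 2 : ℕ) : ℝ) ≤ ((n:ℝ) + 1) / 2 := by
    have := (Nat.cast_le (α := ℝ)).mpr hnat
    push_cast at this ⊢
    linarith
  linarith

lemma integral_uniform
    {Ω : Type*} [MeasureSpace Ω] [IsProbabilityMeasure (ℙ : Measure Ω)]
    (n : ℕ) (hn : 1 ≤ n)
    (J : Ω → ℕ) (hJmeas : Measurable J)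
    (hJ : ∀ k : ℕ, ℙ {ω | J ω = k} = if k ∈ Finset.Icc 1 n then ((n : ℝ≥0∞))⁻¹ else 0)
    (g : ℕ → ℝ) :
    ∫ ω, g (J ω) ∂ℙ = (n : ℝ)⁻¹ * ∑ k ∈ Finset.Icc 1 n, g k := by
  have hn0 : (n : ℝ≥0∞) ≠ 0 := by
    simpa using (Nat.one_le_iff_ne_zero.mp hn)
  set μ : Measure ℕ := Measure.map J ℙ with hμ
  have hsingle : ∀ k : ℕ, μ {k} = if k ∈ Finset.Icc 1 n then ((n : ℝ≥0∞))⁻¹ else 0 := by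
    intro k
    rw [hμ, Measure.map_apply hJmeas (measurableSet_singleton k)]
    exact hJ k
  have hprob : IsProbabilityMeasure μ := Measure.isProbabilityMeasure_map hJmeas.aemeasurable
  have hIcc : μ (Finset.Icc 1 n : Set ℕ) = 1 := by
    have hs : (↑(Finset.Icc 1 n) : Set ℕ) = ⋃ k ∈ Finset.Icc 1 n, ({k} : Set ℕ) := by
      ext x; simp
    rw [hs, measure_biUnion_finset (fun i _ j _ hij => Set.disjoint_singleton.mpr hij)
      (fun k _ => measurableSet_singleton k)]
    rw [Finset.sum_congr rfl fun k hk => (hsingle k).trans (if_pos hk)]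
    simp only [Finset.sum_const, Nat.card_Icc, Nat.add_sub_cancel, nsmul_eq_mul]
    exact ENNReal.mul_inv_cancel hn0 (by simp)
  have hcompl : μ ((Finset.Icc 1 n : Set ℕ))ᶜ = 0 := by
    rw [measure_compl (by measurability) (by simp [hIcc]), hIcc, measure_univ, tsub_self]
  set g' : ℕ → ℝ := fun k => if k ∈ Finset.Icc 1 n then g k else 0 with hg'
  have haemem : ∀ᵐ k ∂μ, k ∈ (Finset.Icc 1 n : Set ℕ) := by
    rw [ae_iff]
    exact hcompl
  have hae : g' =ᵐ[μ] g := by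
    filter_upwards [haemem] with k hk
    simp only [hg', Finset.mem_coe] at hk ⊢
    rw [if_pos hk]
  have hC : ∃ C : ℝ, ∀ k, ‖g' k‖ ≤ C := by
    refine ⟨∑ j ∈ Finset.Icc 1 n, ‖g j‖, fun k => ?_⟩
    by_cases hk : k ∈ Finset.Icc 1 n
    · show ‖if k ∈ Finset.Icc 1 n then g k else 0‖ ≤ _
      rw [if_pos hk]
      exact Finset.single_le_sum (f := fun j => ‖g j‖) (fun j _ => norm_nonneg _) hk
    · show ‖if k ∈ Finset.Icc 1 n then g k else 0‖ ≤ _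
      rw [if_neg hk, norm_zero]
      exact Finset.sum_nonneg fun j _ => norm_nonneg _
  obtain ⟨C, hC⟩ := hC
  have hmeas' : Measurable g' := measurable_from_top
  have hint : Integrable g' μ := by
    refine (integrable_const C).mono' hmeas'.aestronglyMeasurable ?_
    exact Filter.Eventually.of_forall hC
  have key : ∫ ω, g (J ω) ∂ℙ = ∫ k, g' k ∂μ :=
    (integral_map hJmeas.aemeasurable
      (measurable_from_top (f := g)).aestronglyMeasurable).symm.trans
      (integral_congr_ae hae.symm)
  rw [key, MeasureTheory.integral_countable' hint]
  have htsum : ∑' k : ℕ, (μ {k}).toReal • g' k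
      = ∑ k ∈ Finset.Icc 1 n, (μ {k}).toReal • g' k := by
    refine tsum_eq_sum fun k hk => ?_
    simp [hsingle k, hk, hg']
  simp only [measureReal_def]
  rw [htsum, Finset.mul_sum]
  refine Finset.sum_congr rfl fun k hk => ?_
  show (μ {k}).toReal • (if k ∈ Finset.Icc 1 n then g k else 0) = _
  rw [hsingle k, if_pos hk, if_pos hk, ENNReal.toReal_inv, smul_eq_mul]
  norm_num

/-- **Lemma B.1, eq. (B.1)**: the expectation of `ω(J_n)`, the number of distinct prime
factors of a uniform random integer on `{1, …, n}`, is within `1.5` of `log log n`. -/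
theorem expectation_omega_Jn
    {Ω : Type*} [MeasureSpace Ω] [IsProbabilityMeasure (ℙ : Measure Ω)]
    (n : ℕ) (hn : 21 ≤ n)
    -- `J` is uniform on `{1, …, n}`
    (J : Ω → ℕ) (hJmeas : Measurable J)
    (hJ : ∀ k : ℕ, ℙ {ω | J ω = k} = if k ∈ Finset.Icc 1 n then ((n : ℝ≥0∞))⁻¹ else 0) :
    |(∫ ω, ((J ω).primeFactors.card : ℝ) ∂ℙ) - Real.log (Real.log n)| ≤ 1.5 := by
  classical
  set g : ℕ → ℝ := fun k => ((k.primeFactors.card : ℕ) : ℝ) with hg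
  have hE : ∫ ω, ((J ω).primeFactors.card : ℝ) ∂ℙ
      = (n : ℝ)⁻¹ * ∑ k ∈ Finset.Icc 1 n, ((k.primeFactors.card : ℕ) : ℝ) :=
    integral_uniform n (by omega) J hJmeas hJ g
  have hswap : ∑ k ∈ Finset.Icc 1 n, ((k.primeFactors.card : ℕ) : ℝ)
      = ∑ p ∈ (n + 1).primesBelow, ((n / p : ℕ) : ℝ) := by
    have h := swap_sum n (fun _ => (1 : ℝ))
    simpa using h
  rw [hE, hswap]
  have hn0 : (0 : ℝ) < (n : ℝ) := by exact_mod_cast (by omega : 0 < n)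
  have hup : (n : ℝ)⁻¹ * ∑ p ∈ (n + 1).primesBelow, ((n / p : ℕ) : ℝ) ≤ tP n := by
    have h1 : ∑ p ∈ (n + 1).primesBelow, ((n / p : ℕ) : ℝ)
        ≤ ∑ p ∈ (n + 1).primesBelow, (n : ℝ) / (p : ℝ) :=
      Finset.sum_le_sum fun p _ => Nat.cast_div_le
    have h2 : (n : ℝ)⁻¹ * ∑ p ∈ (n + 1).primesBelow, (n : ℝ) / (p : ℝ) = tP n := by
      rw [tP, Finset.mul_sum]
      refine Finset.sum_congr rfl fun p hp => ?_
      have hppos : (0 : ℝ) < (p : ℝ) := by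
        exact_mod_cast (Nat.prime_of_mem_primesBelow hp).pos
      field_simp
    calc (n : ℝ)⁻¹ * ∑ p ∈ (n + 1).primesBelow, ((n / p : ℕ) : ℝ)
        ≤ (n : ℝ)⁻¹ * ∑ p ∈ (n + 1).primesBelow, (n : ℝ) / (p : ℝ) := by
          exact mul_le_mul_of_nonneg_left h1 (by positivity)
      _ = tP n := h2
  have hlow : tP n - (((n + 1).primesBelow.card : ℕ) : ℝ) / n
      ≤ (n : ℝ)⁻¹ * ∑ p ∈ (n + 1).primesBelow, ((n / p : ℕ) : ℝ) := by
    have h1 : ∑ p ∈ (n + 1).primesBelow, ((n : ℝ) / (p : ℝ) - 1)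
        ≤ ∑ p ∈ (n + 1).primesBelow, ((n / p : ℕ) : ℝ) := by
      refine Finset.sum_le_sum fun p hp => ?_
      have hp2 := (Nat.prime_of_mem_primesBelow hp).two_le
      have hppos : (0 : ℝ) < (p : ℝ) := by exact_mod_cast (by omega : 0 < p)
      have hnat : n < p * (n / p) + p := by
        have h2 := Nat.div_add_mod n p
        have h3 : n % p < p := Nat.mod_lt n (by omega)
        omega
      have hcast : (n : ℝ) < (p : ℝ) * ((n / p : ℕ) : ℝ) + p := by exact_mod_cast hnat
      rw [sub_le_iff_le_add, div_le_iff₀ hppos]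
      nlinarith
    have h2 : ∑ p ∈ (n + 1).primesBelow, ((n : ℝ) / (p : ℝ) - 1)
        = (∑ p ∈ (n + 1).primesBelow, (n : ℝ) / (p : ℝ))
          - (((n + 1).primesBelow.card : ℕ) : ℝ) := by
      rw [Finset.sum_sub_distrib, Finset.sum_const, nsmul_eq_mul, mul_one]
    have h3 : (n : ℝ)⁻¹ * ∑ p ∈ (n + 1).primesBelow, (n : ℝ) / (p : ℝ) = tP n := by
      rw [tP, Finset.mul_sum]
      refine Finset.sum_congr rfl fun p hp => ?_
      have hppos : (0 : ℝ) < (p : ℝ) := by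
        exact_mod_cast (Nat.prime_of_mem_primesBelow hp).pos
      field_simp
    have h4 := mul_le_mul_of_nonneg_left h1 (by positivity : (0:ℝ) ≤ (n : ℝ)⁻¹)
    rw [h2, mul_sub, h3] at h4
    calc tP n - (((n + 1).primesBelow.card : ℕ) : ℝ) / n
        = tP n - (n : ℝ)⁻¹ * (((n + 1).primesBelow.card : ℕ) : ℝ) := by
          rw [div_eq_inv_mul]
      _ ≤ _ := h4
  have hupper := tP_final (show 17 ≤ n by omega)
  have hlower := tP_lower hn
  have hpi := pi_bound (show 1 ≤ n by omega)
  have hpin : (((n + 1).primesBelow.card : ℕ) : ℝ) / n ≤ 1 / 2 + 1 / 42 := by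
    rw [div_le_iff₀ hn0]
    have hn21 : (21 : ℝ) ≤ (n : ℝ) := by exact_mod_cast hn
    calc (((n + 1).primesBelow.card : ℕ) : ℝ) ≤ ((n:ℝ) + 1) / 2 := hpi
      _ ≤ (1 / 2 + 1 / 42) * n := by nlinarith
  rw [abs_le]
  constructor
  · nlinarith [hlow, hlower, hpin]
  · nlinarith [hup, hupper]
end
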